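/- arXiv:1311.5780 — 4 statements merged into one kernel-verified Lean document; each statement's English description precedes it below -/
import Mathlib

section
/- Let N ≥ 1 and let λ_1 > λ_2 > ... be given by real numbers l_i = λ_i - i for a strictly decreasing integer sequence. Then the sum over i = 1,...,N of the products over j ≠ i of ((l_i - l_j - 1)/(l_i - l_j)) equals N. Equivalently, for any strictly decreasing integers l_1 > l_2 > ... > l_N, ∑_{i=1}^N ∏_{j≠i} (l_i - l_j - 1)/(l_i - l_j) = N. -/
open Polynomial Finset

lemma coeff_basis_top {N : ℕ} (v : Fin N → ℚ) (hv : Function.Injective v) (i : Fin N) :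
    (Lagrange.basis Finset.univ v i).coeff (N - 1) =
      ∏ j ∈ Finset.univ.erase i, (v i - v j)⁻¹ := by
  have hcard : (Finset.univ.erase i).card = N - 1 := by
    rw [Finset.card_erase_of_mem (Finset.mem_univ i), Finset.card_univ, Fintype.card_fin]
  have hbasis : Lagrange.basis Finset.univ v i =
      C (∏ j ∈ Finset.univ.erase i, (v i - v j)⁻¹) *
        ∏ j ∈ Finset.univ.erase i, (X - C (v j)) := by
    rw [Lagrange.basis]
    simp_rw [Lagrange.basisDivisor]
    rw [Finset.prod_mul_distrib, ← map_prod]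
  rw [hbasis, Polynomial.coeff_C_mul]
  have hm : (∏ j ∈ Finset.univ.erase i, (X - C (v j))).Monic :=
    monic_prod_of_monic _ _ fun j _ => monic_X_sub_C (v j)
  have hnd : (∏ j ∈ Finset.univ.erase i, (X - C (v j))).natDegree = N - 1 := by
    rw [natDegree_prod_of_monic _ _ fun j _ => monic_X_sub_C (v j)]
    simp [hcard]
  have : (∏ j ∈ Finset.univ.erase i, (X - C (v j))).coeff (N - 1) = 1 := by
    rw [← hnd]; exact hm.coeff_natDegree
  rw [this, mul_one]

/-- For strictly decreasing integers `l 1 > l 2 > ... > l N`,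
`∑_{i=1}^N ∏_{j≠i} (l i - l j - 1)/(l i - l j) = N`. -/
theorem stmt_0 (N : ℕ) (hN : 1 ≤ N) (l : Fin N → ℤ) (hl : StrictAnti l) :
    ∑ i : Fin N, ∏ j ∈ Finset.univ.erase i,
      (((l i - l j - 1 : ℤ) : ℚ) / ((l i - l j : ℤ) : ℚ)) = N := by
  classical
  set v : Fin N → ℚ := fun i => (l i : ℚ) with hv
  have hvinj : Function.Injective v := by
    intro a b hab
    have h2 : (l a : ℚ) = (l b : ℚ) := hab
    exact hl.injective (by exact_mod_cast h2)
  have hvs : Set.InjOn v (Finset.univ : Finset (Fin N)) := fun a _ b _ h => hvinj h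
  set P : ℚ[X] := ∏ i : Fin N, (X - C (v i)) with hP
  set Q : ℚ[X] := ∏ i : Fin N, (X - C (v i + 1)) with hQ
  have hPm : P.Monic := monic_prod_of_monic _ _ fun j _ => monic_X_sub_C _
  have hQm : Q.Monic := monic_prod_of_monic _ _ fun j _ => monic_X_sub_C _
  have hPnd : P.natDegree = N := by
    rw [hP, natDegree_prod_of_monic _ _ fun j _ => monic_X_sub_C _]
    simp
  have hQnd : Q.natDegree = N := by
    rw [hQ, natDegree_prod_of_monic _ _ fun j _ => monic_X_sub_C _]
    simp only [natDegree_X_sub_C]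
    simp
  set F : ℚ[X] := P - Q with hF
  -- degree bound
  have hdeg : F.degree < (Finset.univ : Finset (Fin N)).card := by
    have h1 : F.degree < (N : WithBot ℕ) := by
      have hdd : P.degree = Q.degree := by
        rw [Polynomial.degree_eq_natDegree hPm.ne_zero,
          Polynomial.degree_eq_natDegree hQm.ne_zero, hPnd, hQnd]
      have := Polynomial.degree_sub_lt hdd hPm.ne_zero
        (by rw [hPm.leadingCoeff, hQm.leadingCoeff])
      rwa [Polynomial.degree_eq_natDegree hPm.ne_zero, hPnd] at this
    simpa using h1
  -- evaluations
  have hevalF : ∀ i : Fin N, F.eval (v i) = ∏ j ∈ Finset.univ.erase i, (v i - v j - 1) := by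
    intro i
    have hPe : P.eval (v i) = 0 := by
      rw [hP, eval_prod]
      apply Finset.prod_eq_zero (Finset.mem_univ i)
      simp
    have hQe : Q.eval (v i) = ∏ j : Fin N, (v i - v j - 1) := by
      rw [hQ, eval_prod]; congr 1; ext j; simp; ring
    have hsplit : ∏ j : Fin N, (v i - v j - 1) =
        (v i - v i - 1) * ∏ j ∈ Finset.univ.erase i, (v i - v j - 1) :=
      (Finset.mul_prod_erase _ _ (Finset.mem_univ i)).symm
    rw [hF, eval_sub, hPe, hQe, hsplit]
    ring
  -- coefficient of F at N - 1 is N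
  have hcoeffF : F.coeff (N - 1) = N := by
    have h0 : 0 < (Finset.univ : Finset (Fin N)).card := by rw [Finset.card_univ, Fintype.card_fin]; omega
    have hPc := Polynomial.prod_X_sub_C_coeff_card_pred (Finset.univ : Finset (Fin N)) v h0
    have hQc := Polynomial.prod_X_sub_C_coeff_card_pred (Finset.univ : Finset (Fin N))
      (fun i => v i + 1) h0
    simp only [Finset.card_univ, Fintype.card_fin] at hPc hQc
    rw [hF, Polynomial.coeff_sub, ← hP] at *
    rw [hPc, hQc, Finset.sum_add_distrib]
    simp
  -- F equals its interpolation
  have hinterp := Lagrange.eq_interpolate (s := (Finset.univ : Finset (Fin N))) hvs hdeg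
  -- compute coefficient of the interpolation
  have hcoeffI : (Lagrange.interpolate Finset.univ v fun i => F.eval (v i)).coeff (N - 1) =
      ∑ i : Fin N, F.eval (v i) * ∏ j ∈ Finset.univ.erase i, (v i - v j)⁻¹ := by
    rw [Lagrange.interpolate_apply, Polynomial.finset_sum_coeff]
    refine Finset.sum_congr rfl fun i _ => ?_
    rw [Polynomial.coeff_C_mul, coeff_basis_top v hvinj i]
  have key : ∑ i : Fin N, F.eval (v i) * ∏ j ∈ Finset.univ.erase i, (v i - v j)⁻¹ = N := by
    rw [← hcoeffI, ← hinterp, hcoeffF]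
  rw [← key]
  refine Finset.sum_congr rfl fun i _ => ?_
  rw [hevalF i, ← Finset.prod_mul_distrib]
  refine Finset.prod_congr rfl fun j hj => ?_
  rw [div_eq_mul_inv]
  push_cast
  ring
end

section
/- Let V(x_1,...,x_N) = ∏_{i<j}(x_i - x_j) be the Vandermonde polynomial in N variables, and for each i let T_i denote the operator substituting x_i - 1 for x_i. Then ∑_{i=1}^N T_i(V) = N · V as polynomials. -/
open MvPolynomial

/-- Key rational identity, proved via a partial-fraction / interpolation argument. -/
lemma aux_sum_ratio (N : ℕ) (v : Fin N → ℚ) (hv : Function.Injective v) :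
    ∑ i : Fin N, (∏ j ∈ Finset.univ.erase i, (v i - 1 - v j)) /
      (∏ j ∈ Finset.univ.erase i, (v i - v j)) = (N : ℚ) := by
  rcases Nat.eq_zero_or_pos N with hN | hN
  · subst hN; simp
  classical
  set D : Fin N → ℚ := fun i => ∏ j ∈ Finset.univ.erase i, (v i - v j) with hD
  have hDne : ∀ i : Fin N, D i ≠ 0 := by
    intro i
    refine Finset.prod_ne_zero_iff.2 fun j hj => ?_
    have hji : j ≠ i := Finset.ne_of_mem_erase hj
    exact sub_ne_zero.2 fun h => hji (hv h.symm)
  set Q : Polynomial ℚ := ∏ j : Fin N, (Polynomial.X - Polynomial.C (v j)) with hQ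
  set Q1 : Polynomial ℚ := ∏ j : Fin N, (Polynomial.X - Polynomial.C (v j + 1)) with hQ1
  set c : Fin N → ℚ := fun i => Q.eval (v i - 1) / D i with hc
  set G : Polynomial ℚ := ∑ i : Fin N,
    Polynomial.C (c i) * ∏ j ∈ Finset.univ.erase i, (Polynomial.X - Polynomial.C (v j)) with hG
  have hQeval : ∀ t, Q.eval t = ∏ j : Fin N, (t - v j) := by
    intro t; simp [hQ, Polynomial.eval_prod]
  have hQ1eval : ∀ t, Q1.eval t = Q.eval (t - 1) := by
    intro t
    rw [hQeval]
    simp only [hQ1, Polynomial.eval_prod, Polynomial.eval_sub, Polynomial.eval_X,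
      Polynomial.eval_C]
    exact Finset.prod_congr rfl (by intros; ring)
  have hQmonic : Q.Monic := Polynomial.monic_prod_of_monic _ _ fun j _ =>
    Polynomial.monic_X_sub_C _
  have hQ1monic : Q1.Monic := Polynomial.monic_prod_of_monic _ _ fun j _ =>
    Polynomial.monic_X_sub_C _
  have hQdeg : Q.natDegree = N := by
    rw [hQ, Polynomial.natDegree_prod_of_monic _ _ fun j _ => Polynomial.monic_X_sub_C _]
    simp only [Polynomial.natDegree_X_sub_C]
    simp
  have hQ1deg : Q1.natDegree = N := by
    rw [hQ1, Polynomial.natDegree_prod_of_monic _ _ fun j _ => Polynomial.monic_X_sub_C _]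
    simp only [Polynomial.natDegree_X_sub_C]
    simp
  have hMdeg : ∀ i : Fin N,
      (∏ j ∈ Finset.univ.erase i,
        (Polynomial.X - Polynomial.C (v j)) : Polynomial ℚ).natDegree = N - 1 := by
    intro i
    rw [Polynomial.natDegree_prod_of_monic _ _ fun j _ => Polynomial.monic_X_sub_C _]
    simp only [Polynomial.natDegree_X_sub_C]
    simp [Finset.card_erase_of_mem]
  have hMmonic : ∀ i : Fin N,
      (∏ j ∈ Finset.univ.erase i,
        (Polynomial.X - Polynomial.C (v j)) : Polynomial ℚ).Monic :=
    fun i => Polynomial.monic_prod_of_monic _ _ fun j _ => Polynomial.monic_X_sub_C _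
  -- the interpolation identity
  have key : Q1 - Q - G = 0 := by
    apply Polynomial.eq_zero_of_natDegree_lt_card_of_eval_eq_zero _ hv
    · intro k
      have h1 : Q.eval (v k) = 0 := by
        rw [hQeval]
        exact Finset.prod_eq_zero (Finset.mem_univ k) (by simp)
      have h2 : G.eval (v k) = Q.eval (v k - 1) := by
        rw [hG, Polynomial.eval_finset_sum]
        rw [Finset.sum_eq_single k]
        · simp only [Polynomial.eval_mul, Polynomial.eval_C, Polynomial.eval_prod,
            Polynomial.eval_sub, Polynomial.eval_X, hc]
          rw [div_mul_cancel₀ _ (hDne k)]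
        · intro i _ hik
          have hk : k ∈ Finset.univ.erase i := Finset.mem_erase.2 ⟨Ne.symm hik, Finset.mem_univ k⟩
          simp only [Polynomial.eval_mul, Polynomial.eval_C, Polynomial.eval_prod,
            Polynomial.eval_sub, Polynomial.eval_X]
          rw [Finset.prod_eq_zero hk (by simp)]
          ring
        · intro h; exact absurd (Finset.mem_univ k) h
      simp [h1, h2, hQ1eval]
    · have hQQ1 : (Q1 - Q).natDegree < N := by
        rcases eq_or_ne (Q1 - Q) 0 with h | h
        · rw [h]; simpa using hN
        · rw [Polynomial.natDegree_lt_iff_degree_lt h]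
          have hdlt : (Q1 - Q).degree < Q1.degree := by
            apply Polynomial.degree_sub_lt
            · rw [Polynomial.degree_eq_natDegree hQ1monic.ne_zero,
                Polynomial.degree_eq_natDegree hQmonic.ne_zero, hQdeg, hQ1deg]
            · exact hQ1monic.ne_zero
            · rw [hQ1monic.leadingCoeff, hQmonic.leadingCoeff]
          calc (Q1 - Q).degree < Q1.degree := hdlt
            _ = (N : ℕ) := by
                rw [Polynomial.degree_eq_natDegree hQ1monic.ne_zero, hQ1deg]
      have hGdeg : G.natDegree ≤ N - 1 := by
        rw [hG]
        apply Polynomial.natDegree_sum_le_of_forall_le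
        intro i _
        calc (Polynomial.C (c i) * ∏ j ∈ Finset.univ.erase i,
              (Polynomial.X - Polynomial.C (v j))).natDegree
            ≤ (Polynomial.C (c i)).natDegree +
              (∏ j ∈ Finset.univ.erase i,
                (Polynomial.X - Polynomial.C (v j)) : Polynomial ℚ).natDegree :=
              Polynomial.natDegree_mul_le
          _ ≤ N - 1 := by rw [Polynomial.natDegree_C, hMdeg i]; simp
      have : (Q1 - Q - G).natDegree < N := by
        calc (Q1 - Q - G).natDegree ≤ max (Q1 - Q).natDegree G.natDegree :=
            Polynomial.natDegree_sub_le _ _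
          _ < N := max_lt hQQ1 (lt_of_le_of_lt hGdeg (Nat.sub_lt hN one_pos))
      simpa using this
  -- extract the coefficient of degree N - 1
  have hQcoeff : Q.coeff (N - 1) = -∑ j : Fin N, v j := by
    have h := Polynomial.prod_X_sub_C_nextCoeff (s := (Finset.univ : Finset (Fin N))) v
    rw [← hQ, Polynomial.nextCoeff, hQdeg, if_neg hN.ne'] at h
    exact h
  have hQ1coeff : Q1.coeff (N - 1) = -∑ j : Fin N, (v j + 1) := by
    have h := Polynomial.prod_X_sub_C_nextCoeff (s := (Finset.univ : Finset (Fin N)))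
      (fun j => v j + 1)
    rw [← hQ1, Polynomial.nextCoeff, hQ1deg, if_neg hN.ne'] at h
    exact h
  have hGcoeff : G.coeff (N - 1) = ∑ i : Fin N, c i := by
    rw [hG, Polynomial.finset_sum_coeff]
    refine Finset.sum_congr rfl fun i _ => ?_
    rw [Polynomial.coeff_C_mul]
    have h1 : (∏ j ∈ Finset.univ.erase i,
        (Polynomial.X - Polynomial.C (v j)) : Polynomial ℚ).coeff (N - 1) = 1 := by
      have h := (hMmonic i).coeff_natDegree
      rwa [hMdeg i] at h
    rw [h1, mul_one]
  have hQQ : Q1 - Q = G := by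
    have h := sub_eq_zero.mp key
    exact h
  have hsumc : ∑ i : Fin N, c i = -(N : ℚ) := by
    have h := congrArg (fun p => Polynomial.coeff p (N - 1)) hQQ
    simp only [Polynomial.coeff_sub] at h
    rw [hQcoeff, hQ1coeff, hGcoeff] at h
    rw [← h, Finset.sum_add_distrib]
    simp
  -- convert to the stated form
  have hterm : ∀ i : Fin N,
      (∏ j ∈ Finset.univ.erase i, (v i - 1 - v j)) / D i = -c i := by
    intro i
    have hprod : Q.eval (v i - 1) = -(∏ j ∈ Finset.univ.erase i, (v i - 1 - v j)) := by
      rw [hQeval]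
      rw [← Finset.mul_prod_erase Finset.univ (fun j => v i - 1 - v j) (Finset.mem_univ i)]
      ring
    rw [hc]
    simp only []
    rw [hprod, neg_div, neg_neg]
  calc ∑ i : Fin N, (∏ j ∈ Finset.univ.erase i, (v i - 1 - v j)) /
        (∏ j ∈ Finset.univ.erase i, (v i - v j))
      = ∑ i : Fin N, -c i := Finset.sum_congr rfl fun i _ => hterm i
    _ = -∑ i : Fin N, c i := by rw [← Finset.sum_neg_distrib]
    _ = (N : ℚ) := by rw [hsumc]; ring

/-- Factorization step: relating the shifted Vandermonde value to the original. -/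
lemma aux_factor (N : ℕ) (v : Fin N → ℚ) (i : Fin N) :
    (∏ p ∈ Finset.univ.filter (fun p : Fin N × Fin N => p.1 < p.2),
        ((if p.1 = i then v p.1 - 1 else v p.1) - (if p.2 = i then v p.2 - 1 else v p.2)))
      * (∏ j ∈ Finset.univ.erase i, (v i - v j))
    = (∏ j ∈ Finset.univ.erase i, (v i - 1 - v j)) *
      (∏ p ∈ Finset.univ.filter (fun p : Fin N × Fin N => p.1 < p.2), (v p.1 - v p.2)) := by
  classical
  set S := Finset.univ.filter (fun p : Fin N × Fin N => p.1 < p.2) with hS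
  have hmemS : ∀ p : Fin N × Fin N, p ∈ S ↔ p.1 < p.2 := by
    intro p; rw [hS, Finset.mem_filter]; simp
  have split1 : ∀ f : Fin N × Fin N → ℚ, ∏ p ∈ S, f p =
      (∏ p ∈ S.filter (fun p => p.1 = i ∨ p.2 = i), f p) *
      ∏ p ∈ S.filter (fun p => ¬(p.1 = i ∨ p.2 = i)), f p :=
    fun f => (Finset.prod_filter_mul_prod_filter_not S _ f).symm
  have hnot : ∏ p ∈ S.filter (fun p => ¬(p.1 = i ∨ p.2 = i)),
        ((if p.1 = i then v p.1 - 1 else v p.1) - (if p.2 = i then v p.2 - 1 else v p.2))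
      = ∏ p ∈ S.filter (fun p => ¬(p.1 = i ∨ p.2 = i)), (v p.1 - v p.2) := by
    refine Finset.prod_congr rfl fun p hp => ?_
    rw [Finset.mem_filter, not_or] at hp
    rw [if_neg hp.2.1, if_neg hp.2.2]
  -- reindex the products over pairs containing i
  have reindex : ∀ f : Fin N × Fin N → ℚ,
      ∏ p ∈ S.filter (fun p => p.1 = i ∨ p.2 = i), f p =
      ∏ j ∈ Finset.univ.erase i, f (if j < i then (j, i) else (i, j)) := by
    intro f
    have hinv : ∀ p ∈ S.filter (fun p => p.1 = i ∨ p.2 = i),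
        (if (if p.1 = i then p.2 else p.1) < i then ((if p.1 = i then p.2 else p.1), i)
          else (i, (if p.1 = i then p.2 else p.1))) = p := by
      intro p hp
      rw [Finset.mem_filter, hmemS] at hp
      obtain ⟨hlt, hor⟩ := hp
      rcases eq_or_ne p.1 i with h1 | h1
      · rw [if_pos h1]
        have h2 : ¬ p.2 < i := by rw [← h1]; exact not_lt.2 (le_of_lt hlt)
        rw [if_neg h2, ← h1]
      · rw [if_neg h1]
        have h2 : p.2 = i := hor.resolve_left h1
        have h3 : p.1 < i := h2 ▸ hlt
        rw [if_pos h3, ← h2]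
    refine Finset.prod_nbij' (fun p => if p.1 = i then p.2 else p.1)
      (fun j => if j < i then (j, i) else (i, j)) ?_ ?_ hinv ?_ ?_
    · intro p hp
      rw [Finset.mem_filter, hmemS] at hp
      obtain ⟨hlt, hor⟩ := hp
      rcases eq_or_ne p.1 i with h1 | h1
      · simp only [if_pos h1]
        refine Finset.mem_erase.2 ⟨?_, Finset.mem_univ _⟩
        intro h; rw [h, ← h1] at hlt; exact lt_irrefl _ hlt
      · simp only [if_neg h1]
        exact Finset.mem_erase.2 ⟨h1, Finset.mem_univ _⟩
    · intro j hj
      have hji : j ≠ i := Finset.ne_of_mem_erase hj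
      by_cases h : j < i
      · simp only [if_pos h, Finset.mem_filter, hmemS]
        exact ⟨h, Or.inr trivial⟩
      · simp only [if_neg h, Finset.mem_filter, hmemS]
        exact ⟨lt_of_le_of_ne (not_lt.1 h) (Ne.symm hji), Or.inl trivial⟩
    · intro j hj
      have hji : j ≠ i := Finset.ne_of_mem_erase hj
      by_cases h : j < i
      · simp only [if_pos h]
        simp [hji]
      · simp only [if_neg h]
        simp
    · intro p hp
      exact (congrArg f (hinv p hp)).symm
  rw [split1 (fun p => (if p.1 = i then v p.1 - 1 else v p.1) -
      (if p.2 = i then v p.2 - 1 else v p.2)),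
    split1 (fun p => v p.1 - v p.2), hnot, reindex, reindex]
  rw [mul_right_comm, ← Finset.prod_mul_distrib,
    mul_comm (∏ j ∈ Finset.univ.erase i, (v i - 1 - v j)) _, mul_right_comm,
    ← Finset.prod_mul_distrib]
  congr 1
  refine Finset.prod_congr rfl fun j hj => ?_
  have hji : j ≠ i := Finset.ne_of_mem_erase hj
  by_cases h : j < i
  · simp only [if_pos h, if_neg hji, eq_self_iff_true, if_true]
    ring
  · simp only [if_neg h, if_neg hji, eq_self_iff_true, if_true]
    ring

/-- With `V` the Vandermonde polynomial `∏_{i<j} (x i - x j)` and `T i` the substitution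
`x i ↦ x i - 1`, one has `∑ i, T i (V) = N • V`. -/
theorem stmt_1 (N : ℕ) (V : MvPolynomial (Fin N) ℚ)
    (hV : V = ∏ p ∈ Finset.univ.filter (fun p : Fin N × Fin N => p.1 < p.2),
      (X p.1 - X p.2)) :
    ∑ i : Fin N, aeval (fun j : Fin N => if j = i then X j - 1 else X j) V
      = (N : MvPolynomial (Fin N) ℚ) * V := by
  classical
  subst hV
  set S := Finset.univ.filter (fun p : Fin N × Fin N => p.1 < p.2) with hS
  set V : MvPolynomial (Fin N) ℚ := ∏ p ∈ S, (X p.1 - X p.2) with hVdef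
  have hVne : V ≠ 0 := by
    rw [hVdef]
    refine Finset.prod_ne_zero_iff.2 fun p hp => ?_
    rw [hS, Finset.mem_filter] at hp
    have hne : p.1 ≠ p.2 := ne_of_lt hp.2
    exact sub_ne_zero.2 fun h => hne (MvPolynomial.X_injective h)
  apply mul_right_cancel₀ hVne
  apply MvPolynomial.funext
  intro x
  have hevalV : eval x V = ∏ p ∈ S, (x p.1 - x p.2) := by
    simp [hVdef]
  have hevalT : ∀ i : Fin N,
      eval x (aeval (fun j : Fin N => if j = i then X j - 1 else X j) V)
      = ∏ p ∈ S, ((if p.1 = i then x p.1 - 1 else x p.1) -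
          (if p.2 = i then x p.2 - 1 else x p.2)) := by
    intro i
    rw [hVdef, map_prod, map_prod]
    refine Finset.prod_congr rfl fun p _ => ?_
    simp only [map_sub, aeval_X]
    congr 1 <;> split_ifs <;> simp
  rw [map_mul, map_mul, map_sum]
  simp only [hevalT]
  by_cases hVx : eval x V = 0
  · rw [hVx, mul_zero, mul_zero]
  · have hVprod : (∏ p ∈ S, (x p.1 - x p.2)) ≠ 0 := by rwa [hevalV] at hVx
    have hinj : Function.Injective x := by
      intro a b hab
      by_contra hne
      have hpair : ∃ q : Fin N × Fin N, q ∈ S ∧ x q.1 - x q.2 = 0 := by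
        rcases lt_or_gt_of_ne hne with h | h
        · exact ⟨(a, b), by rw [hS, Finset.mem_filter]; exact ⟨Finset.mem_univ _, h⟩,
            by simp [hab]⟩
        · exact ⟨(b, a), by rw [hS, Finset.mem_filter]; exact ⟨Finset.mem_univ _, h⟩,
            by simp [hab]⟩
      obtain ⟨q, hq, hq0⟩ := hpair
      exact hVprod (Finset.prod_eq_zero hq hq0)
    have hDne : ∀ i : Fin N, (∏ j ∈ Finset.univ.erase i, (x i - x j)) ≠ 0 := by
      intro i
      refine Finset.prod_ne_zero_iff.2 fun j hj => ?_
      have hji : j ≠ i := Finset.ne_of_mem_erase hj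
      exact sub_ne_zero.2 fun h => hji (hinj h.symm)
    have hterm : ∀ i : Fin N,
        (∏ p ∈ S, ((if p.1 = i then x p.1 - 1 else x p.1) -
          (if p.2 = i then x p.2 - 1 else x p.2)))
        = ((∏ j ∈ Finset.univ.erase i, (x i - 1 - x j)) /
            (∏ j ∈ Finset.univ.erase i, (x i - x j))) * ∏ p ∈ S, (x p.1 - x p.2) := by
      intro i
      have h := aux_factor N x i
      rw [← hS] at h
      rw [div_mul_eq_mul_div, eq_div_iff (hDne i)]
      exact h
    calc (∑ i : Fin N, ∏ p ∈ S, ((if p.1 = i then x p.1 - 1 else x p.1) -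
          (if p.2 = i then x p.2 - 1 else x p.2))) * eval x V
        = (∑ i : Fin N, ((∏ j ∈ Finset.univ.erase i, (x i - 1 - x j)) /
            (∏ j ∈ Finset.univ.erase i, (x i - x j))) * ∏ p ∈ S, (x p.1 - x p.2))
            * eval x V := by
          rw [Finset.sum_congr rfl fun i _ => hterm i]
      _ = ((N : ℚ) * ∏ p ∈ S, (x p.1 - x p.2)) * eval x V := by
          rw [← Finset.sum_mul, aux_sum_ratio N x hinj]
      _ = ((N : ℚ) * eval x V) * eval x V := by rw [hevalV]
      _ = eval x ((N : MvPolynomial (Fin N) ℚ)) * eval x V * eval x V := by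
          simp
      _ = eval x ((N : MvPolynomial (Fin N) ℚ) * V) * eval x V := by
          rw [map_mul]
end

section
/- Let f(z_1,...,z_n) be analytic in a neighborhood of (1,...,1), let P be a set of pairs (a,b) with 1 ≤ a < b ≤ n, and define f_P = (1/n!) ∑_{σ ∈ S_n} f(z_{σ(1)},...,z_{σ(n)}) / ∏_{(a,b)∈P} (z_{σ(a)} - z_{σ(b)}). Then f_P extends to an analytic function in a (possibly smaller) neighborhood of (1,...,1). -/
open Filter


open Filter Finset

section Core

variable {E : Type*} [NormedAddCommGroup E] [NormedSpace ℂ E]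

/-- The quotient power series: dividing `p` (shifted by one degree) by the linear
functional `ℓ`, using the decomposition `w = π w + ℓ w • e`. -/
noncomputable def quotSeries (p : FormalMultilinearSeries ℂ E ℂ) (e : E) (π : E →L[ℂ] E) :
    FormalMultilinearSeries ℂ E ℂ := fun k =>
  ∑ t : Fin (k + 1),
    (((p (k + 1)).domDomCongr (Fin.cycleRange t)).curryLeft e).compContinuousLinearMap
      (fun j : Fin k => if (j : ℕ) < (t : ℕ) then ContinuousLinearMap.id ℂ E else π)

lemma quotSeries_norm_le (p : FormalMultilinearSeries ℂ E ℂ) (e : E) (π : E →L[ℂ] E) (k : ℕ) :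
    ‖quotSeries p e π k‖ ≤ (k + 1) * (‖p (k + 1)‖ * ‖e‖ * max 1 ‖π‖ ^ k) := by
  refine (norm_sum_le _ _).trans ?_
  have h : ∀ t : Fin (k + 1),
      ‖(((p (k + 1)).domDomCongr (Fin.cycleRange t)).curryLeft e).compContinuousLinearMap
        (fun j : Fin k => if (j : ℕ) < (t : ℕ) then ContinuousLinearMap.id ℂ E else π)‖
        ≤ ‖p (k + 1)‖ * ‖e‖ * max 1 ‖π‖ ^ k := by
    intro t
    refine (ContinuousMultilinearMap.norm_compContinuousLinearMap_le _ _).trans ?_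
    have h1 : ‖((p (k + 1)).domDomCongr (Fin.cycleRange t)).curryLeft e‖
        ≤ ‖p (k + 1)‖ * ‖e‖ := by
      refine (ContinuousLinearMap.le_opNorm _ _).trans ?_
      rw [ContinuousMultilinearMap.curryLeft_norm,
        ContinuousMultilinearMap.norm_domDomCongr]
    have h2 : ∀ j : Fin k,
        ‖if (j : ℕ) < (t : ℕ) then ContinuousLinearMap.id ℂ E else π‖ ≤ max 1 ‖π‖ := by
      intro j
      split
      · exact le_trans (ContinuousLinearMap.norm_id_le) (le_max_left _ _)
      · exact le_max_right _ _
    calc ‖((p (k + 1)).domDomCongr (Fin.cycleRange t)).curryLeft e‖ *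
          ∏ j : Fin k, ‖if (j : ℕ) < (t : ℕ) then ContinuousLinearMap.id ℂ E else π‖
        ≤ (‖p (k + 1)‖ * ‖e‖) * ∏ _j : Fin k, max 1 ‖π‖ := by
          refine mul_le_mul h1 (Finset.prod_le_prod (fun _ _ => norm_nonneg _)
            (fun j _ => h2 j)) (Finset.prod_nonneg fun _ _ => norm_nonneg _)
            (by positivity)
      _ = ‖p (k + 1)‖ * ‖e‖ * max 1 ‖π‖ ^ k := by
          rw [Finset.prod_const, Finset.card_univ, Fintype.card_fin]
  calc ∑ t : Fin (k + 1), ‖(((p (k + 1)).domDomCongr (Fin.cycleRange t)).curryLeft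
          e).compContinuousLinearMap
        (fun j : Fin k => if (j : ℕ) < (t : ℕ) then ContinuousLinearMap.id ℂ E else π)‖
      ≤ ∑ _t : Fin (k + 1), ‖p (k + 1)‖ * ‖e‖ * max 1 ‖π‖ ^ k :=
        Finset.sum_le_sum fun t _ => h t
    _ = (k + 1) * (‖p (k + 1)‖ * ‖e‖ * max 1 ‖π‖ ^ k) := by
        rw [Finset.sum_const, Finset.card_univ, Fintype.card_fin]
        rw [nsmul_eq_mul]; push_cast; ring

/-- Key diagonal identity for the quotient series. -/
lemma quotSeries_diag (p : FormalMultilinearSeries ℂ E ℂ) (e : E) (π : E →L[ℂ] E)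
    (ℓ : E →L[ℂ] ℂ) (w : E) (he : π w + ℓ w • e = w) (k : ℕ) :
    ℓ w * quotSeries p e π k (fun _ => w)
      = p (k + 1) (fun _ => w) - p (k + 1) (fun _ => π w) := by
  classical
  set phat := p (k + 1) with hphat
  set base : ℕ → Fin (k + 1) → E := fun s i => if (i : ℕ) < s then w else π w with hbase
  have hsum : quotSeries p e π k (fun _ => w)
      = ∑ t : Fin (k + 1), phat (Function.update (base (t : ℕ)) t e) := by
    rw [quotSeries, ContinuousMultilinearMap.sum_apply]
    refine Finset.sum_congr rfl fun t _ => ?_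
    rw [ContinuousMultilinearMap.compContinuousLinearMap_apply,
      ContinuousMultilinearMap.curryLeft_apply,
      ContinuousMultilinearMap.domDomCongr_apply]
    congr 1
    funext i
    rcases lt_trichotomy i t with hlt | heq | hgt
    · -- i < t : slot gets w
      have hik : (i : ℕ) < k := lt_of_lt_of_le hlt (Fin.is_le t)
      have h1 : Fin.cycleRange t i = Fin.succ ⟨(i : ℕ), hik⟩ := by
        rw [Fin.cycleRange_of_lt hlt]
        ext
        simp [Fin.val_add_one_of_lt (lt_of_lt_of_le hlt (Fin.le_last t))]
      rw [h1, Fin.cons_succ]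
      have h2 : Function.update (base (t : ℕ)) t e i = w := by
        rw [Function.update_of_ne (ne_of_lt hlt), hbase]
        simp [Fin.lt_iff_val_lt_val.mp hlt]
      rw [h2]
      simp [Fin.lt_iff_val_lt_val.mp hlt]
    · rw [heq, Fin.cycleRange_self, Fin.cons_zero, Function.update_self]
    · -- i > t : slot gets π w
      have h1 : Fin.cycleRange t i = i := Fin.cycleRange_of_gt hgt
      have hi0 : i ≠ 0 := by
        intro h; rw [h] at hgt; exact absurd hgt (by simp [Fin.lt_iff_val_lt_val])
      have h2 : i = Fin.succ (i.pred hi0) := (Fin.succ_pred i hi0).symm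
      have h3 : ¬ ((i : ℕ) - 1 < (t : ℕ)) := by
        have := Fin.lt_iff_val_lt_val.mp hgt
        omega
      have h4 : Function.update (base (t : ℕ)) t e i = π w := by
        rw [Function.update_of_ne (ne_of_gt hgt), hbase]
        have := Fin.lt_iff_val_lt_val.mp hgt
        simp; omega
      rw [h1, h4, h2, Fin.cons_succ]
      simp [Fin.coe_pred, h3]
  rw [hsum, Finset.mul_sum]
  have hterm : ∀ t : Fin (k + 1),
      ℓ w * phat (Function.update (base (t : ℕ)) t e)
        = phat (base ((t : ℕ) + 1)) - phat (base (t : ℕ)) := by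
    intro t
    have h1 : ℓ w * phat (Function.update (base (t : ℕ)) t e)
        = phat (Function.update (base (t : ℕ)) t (ℓ w • e)) := by
      rw [ContinuousMultilinearMap.map_update_smul, smul_eq_mul]
    have he' : ℓ w • e = w - π w := eq_sub_iff_add_eq'.mpr he
    have h2 : Function.update (base (t : ℕ)) t w = base ((t : ℕ) + 1) := by
      funext i
      rcases eq_or_ne i t with rfl | hne
      · rw [Function.update_self, hbase]; simp
      · rw [Function.update_of_ne hne, hbase]
        have hne' : (i : ℕ) ≠ (t : ℕ) := fun h => hne (Fin.ext h)
        by_cases h : (i : ℕ) < (t : ℕ)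
        · simp only [if_pos h, if_pos (Nat.lt_succ_of_lt h)]
        · have h' : ¬ ((i : ℕ) < (t : ℕ) + 1) := by omega
          simp only [if_neg h, if_neg h']
    have h3 : Function.update (base (t : ℕ)) t (π w) = base (t : ℕ) := by
      funext i
      rcases eq_or_ne i t with rfl | hne
      · rw [Function.update_self, hbase]; simp
      · rw [Function.update_of_ne hne]
    rw [h1, he', ContinuousMultilinearMap.map_update_sub, h2, h3]
  rw [Finset.sum_congr rfl fun t _ => hterm t]
  have hfin : ∑ t : Fin (k + 1), (phat (base ((t : ℕ) + 1)) - phat (base (t : ℕ)))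
      = ∑ s ∈ Finset.range (k + 1), (phat (base (s + 1)) - phat (base s)) :=
    Fin.sum_univ_eq_sum_range (fun s => phat (base (s + 1)) - phat (base s)) (k + 1)
  rw [hfin, Finset.sum_range_sub (fun s => phat (base s))]
  have hb1 : base (k + 1) = fun _ => w := by funext i; simp [hbase, i.isLt]
  have hb0 : base 0 = fun _ => π w := by funext i; simp [hbase]
  rw [hb1, hb0]

/-- Division of an analytic function by a linear functional, given vanishing on the
corresponding hyperplane through `c`. -/
lemma analytic_div_linear {H : E → ℂ} {c : E} (hH : AnalyticAt ℂ H c)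
    (ℓ : E →L[ℂ] ℂ) (π : E →L[ℂ] E) (e : E) (he : ∀ w, π w + ℓ w • e = w)
    (hvan : ∀ᶠ w in nhds (0 : E), H (c + π w) = 0) :
    ∃ K : E → ℂ, AnalyticAt ℂ K c ∧ ∀ᶠ z in nhds c, H z = ℓ (z - c) * K z := by
  obtain ⟨p, r, hp⟩ := hH
  -- radius bound for p
  have hrpos : (0 : ENNReal) < p.radius := lt_of_lt_of_le hp.r_pos hp.r_le
  obtain ⟨r1, hr1a, hr1b⟩ := ENNReal.lt_iff_exists_nnreal_btwn.mp hrpos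
  have hr1pos : (0 : ℝ) < (r1 : ℝ) := by exact_mod_cast hr1a
  obtain ⟨C, hC0, hC⟩ := p.norm_mul_pow_le_of_lt_radius hr1b
  set q := quotSeries p e π with hq
  -- radius of q is positive
  set M : ℝ := max 1 ‖π‖ with hM
  have hM1 : (1 : ℝ) ≤ M := le_max_left _ _
  have hM0 : (0 : ℝ) < M := lt_of_lt_of_le one_pos hM1
  set ρ : NNReal := r1 / (2 * (1 ⊔ ‖π‖₊)) with hρ
  have hρval : (ρ : ℝ) = (r1 : ℝ) / (2 * M) := by
    rw [hρ, NNReal.coe_div, NNReal.coe_mul]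
    norm_num [hM]
  have hρpos : 0 < (ρ : ℝ) := by
    rw [hρval]; positivity
  have hqrad : (0 : ENNReal) < q.radius := by
    have hbound : ∀ k : ℕ, ‖q k‖ * (ρ : ℝ) ^ k ≤ 2 * ‖e‖ * C / r1 := by
      intro k
      have h1 : ‖q k‖ ≤ (k + 1) * (‖p (k + 1)‖ * ‖e‖ * M ^ k) :=
        quotSeries_norm_le p e π k
      have h2 : ((k : ℝ) + 1) ≤ 2 ^ k * 2 := by
        have hn : k < 2 ^ k := Nat.lt_two_pow_self (n := k)
        have h2' : ((k : ℝ) + 1) ≤ 2 ^ k := by exact_mod_cast hn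
        nlinarith [pow_pos (show (0:ℝ) < 2 by norm_num) k]
      have h3 : ‖p (k + 1)‖ * (r1 : ℝ) ^ (k + 1) ≤ C := hC (k + 1)
      have hpk : 0 ≤ ‖p (k + 1)‖ := norm_nonneg _
      have hρk : (ρ : ℝ) ^ k = (r1 : ℝ) ^ k / (2 ^ k * M ^ k) := by
        rw [hρval, div_pow, mul_pow]
      calc ‖q k‖ * (ρ : ℝ) ^ k
          ≤ ((k + 1) * (‖p (k + 1)‖ * ‖e‖ * M ^ k)) * (ρ : ℝ) ^ k := by
            apply mul_le_mul_of_nonneg_right h1 (by positivity)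
        _ = ((k : ℝ) + 1) / 2 ^ k * (‖p (k + 1)‖ * (r1 : ℝ) ^ k) * ‖e‖ := by
            rw [hρk]; field_simp
        _ ≤ 2 * (‖p (k + 1)‖ * (r1 : ℝ) ^ k) * ‖e‖ := by
            apply mul_le_mul_of_nonneg_right _ (norm_nonneg e)
            apply mul_le_mul_of_nonneg_right _ (by positivity)
            rw [div_le_iff₀ (by positivity)]
            linarith [h2]
        _ ≤ 2 * (C / r1) * ‖e‖ := by
            apply mul_le_mul_of_nonneg_right _ (norm_nonneg e)
            apply mul_le_mul_of_nonneg_left _ (by norm_num)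
            rw [le_div_iff₀ hr1pos]
            calc ‖p (k + 1)‖ * (r1 : ℝ) ^ k * r1 = ‖p (k + 1)‖ * (r1 : ℝ) ^ (k + 1) := by ring
              _ ≤ C := h3
        _ = 2 * ‖e‖ * C / r1 := by ring
    have := q.le_radius_of_bound _ hbound
    calc (0 : ENNReal) < (ρ : ENNReal) := by exact_mod_cast hρpos
      _ ≤ q.radius := this
  -- the candidate quotient
  refine ⟨fun z => q.sum (z - c), ?_, ?_⟩
  · have h0 : c - c = (0 : E) := sub_self c
    have h1 : AnalyticAt ℂ q.sum (c - c) := by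
      rw [h0]
      exact (q.hasFPowerSeriesOnBall hqrad).analyticAt
    have h2 : AnalyticAt ℂ (fun z : E => z - c) c := analyticAt_id.sub analyticAt_const
    have h3 := AnalyticAt.comp (g := q.sum) (f := fun z : E => z - c) (x := c) (by exact h1) h2
    exact h3
  · -- the identity near c
    have hev : ∀ᶠ w in nhds (0 : E), H (c + w) = ℓ w * q.sum w := by
      have e1 : ∀ᶠ w in nhds (0 : E), w ∈ EMetric.ball (0 : E) r :=
        EMetric.ball_mem_nhds _ hp.r_pos
      have e2 : ∀ᶠ w in nhds (0 : E), π w ∈ EMetric.ball (0 : E) r := by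
        have hcont : Continuous fun w : E => π w := π.continuous
        have : Filter.Tendsto (fun w : E => π w) (nhds 0) (nhds (0 : E)) := by
          simpa using hcont.tendsto 0
        exact this.eventually e1
      have e3 : ∀ᶠ w in nhds (0 : E), w ∈ EMetric.ball (0 : E) q.radius :=
        EMetric.ball_mem_nhds _ hqrad
      filter_upwards [e1, e2, e3, hvan] with w hw1 hw2 hw3 hw4
      have hs1 : HasSum (fun m => p m fun _ => w) (H (c + w)) := hp.hasSum hw1
      have hs2 : HasSum (fun m => p m fun _ => π w) (0 : ℂ) := by
        have := hp.hasSum hw2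
        rwa [hw4] at this
      have hs3 : HasSum (fun k => q k fun _ => w) (q.sum w) := q.hasSum hw3
      have hb : HasSum (fun m => p m (fun _ => w) - p m (fun _ => π w)) (H (c + w) - 0) :=
        hs1.sub hs2
      have hshift : HasSum (fun k => p (k + 1) (fun _ => w) - p (k + 1) (fun _ => π w))
          (ℓ w * q.sum w) := by
        have := hs3.mul_left (ℓ w)
        have heq : (fun k => ℓ w * q k fun _ => w)
            = fun k => p (k + 1) (fun _ => w) - p (k + 1) (fun _ => π w) := by
          funext k
          exact quotSeries_diag p e π ℓ w (he w) k
        rwa [heq] at this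
      have hzero : p 0 (fun _ => w) - p 0 (fun _ => π w) = 0 := by
        have : (fun _ : Fin 0 => w) = (fun _ : Fin 0 => π w) := by
          funext i; exact absurd i.isLt (by omega)
        rw [this, sub_self]
      have h2 := (hasSum_nat_add_iff (f := fun m => p m (fun _ => w) - p m (fun _ => π w)) 1).mp
        hshift
      rw [Finset.range_one, Finset.sum_singleton, hzero, add_zero] at h2
      have := hb.unique h2
      rw [sub_zero] at this
      exact this
    have htend : Filter.Tendsto (fun z : E => z - c) (nhds c) (nhds (0 : E)) := by
      have : Continuous fun z : E => z - c := continuous_id.sub continuous_const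
      simpa using this.tendsto c
    filter_upwards [htend.eventually hev] with z hz
    simpa using hz

end Core

section Multi

variable {n : ℕ}

lemma multi_div (Q : Finset (Fin n × Fin n)) :
    ∀ {H : (Fin n → ℂ) → ℂ}, AnalyticAt ℂ H (fun _ => 1) →
    (∀ p ∈ Q, p.1 < p.2) →
    (∀ p ∈ Q, ∀ᶠ z : Fin n → ℂ in nhds (fun _ => 1), z p.1 = z p.2 → H z = 0) →
    ∃ K : (Fin n → ℂ) → ℂ, AnalyticAt ℂ K (fun _ => 1) ∧
      ∀ᶠ z : Fin n → ℂ in nhds (fun _ => 1),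
        H z = (∏ p ∈ Q, (z p.1 - z p.2)) * K z := by
  classical
  induction Q using Finset.induction_on with
  | empty =>
    intro H hH _ _
    exact ⟨H, hH, Eventually.of_forall fun z => by simp⟩
  | insert a s ha ih =>
    intro H hH hQ hvan
    set c : Fin n → ℂ := fun _ => 1 with hc
    obtain ⟨i, j⟩ := a
    have hij : i < j := hQ (i, j) (mem_insert_self _ _)
    have hijne : i ≠ j := ne_of_lt hij
    -- the linear data
    set ℓ : (Fin n → ℂ) →L[ℂ] ℂ :=
      (ContinuousLinearMap.proj (R := ℂ) (φ := fun _ : Fin n => ℂ) i)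
        - (ContinuousLinearMap.proj (R := ℂ) (φ := fun _ : Fin n => ℂ) j) with hℓ
    set π : (Fin n → ℂ) →L[ℂ] (Fin n → ℂ) :=
      ContinuousLinearMap.pi (fun t => if t = i
        then ContinuousLinearMap.proj (R := ℂ) (φ := fun _ : Fin n => ℂ) j
        else ContinuousLinearMap.proj (R := ℂ) (φ := fun _ : Fin n => ℂ) t) with hπ
    have hπ_apply : ∀ (w : Fin n → ℂ) (t : Fin n), π w t = if t = i then w j else w t := by
      intro w t
      rw [hπ, ContinuousLinearMap.pi_apply]
      split <;> simp
    have hℓ_apply : ∀ w : Fin n → ℂ, ℓ w = w i - w j := by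
      intro w; rw [hℓ]; simp
    set e : Fin n → ℂ := Pi.single i 1 with he'
    have he : ∀ w : Fin n → ℂ, π w + ℓ w • e = w := by
      intro w
      funext t
      rcases eq_or_ne t i with rfl | ht
      · simp [hπ_apply, hℓ_apply, he', Pi.single_eq_same]
      · simp [hπ_apply, hℓ_apply, he', ht, Pi.single_eq_of_ne ht]
    -- vanishing hypothesis transported to the hyperplane parametrization
    have hvA : ∀ᶠ z : Fin n → ℂ in nhds c, z i = z j → H z = 0 :=
      hvan (i, j) (mem_insert_self _ _)
    have htend0 : Filter.Tendsto (fun w : Fin n → ℂ => c + π w)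
        (nhds 0) (nhds c) := by
      have hcont : Continuous fun w : Fin n → ℂ => c + π w :=
        continuous_const.add π.continuous
      have := hcont.tendsto 0
      simpa using this
    have hvan0 : ∀ᶠ w : Fin n → ℂ in nhds 0, H (c + π w) = 0 := by
      filter_upwards [htend0.eventually hvA] with w hw
      apply hw
      simp [hπ_apply, hijne, hc]
    obtain ⟨K₁, hK₁, heq⟩ := analytic_div_linear hH ℓ π e he hvan0
    have heq' : ∀ᶠ z : Fin n → ℂ in nhds c, H z = (z i - z j) * K₁ z := by
      filter_upwards [heq] with z hz
      rw [hz, hℓ_apply]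
      simp [hc]
    -- K₁ vanishes on the remaining hyperplanes
    have hvan' : ∀ p ∈ s, ∀ᶠ z : Fin n → ℂ in nhds c, z p.1 = z p.2 → K₁ z = 0 := by
      intro p hp
      have hap : (i, j) ≠ p := fun h => ha (h ▸ hp)
      have hpij : p.1 < p.2 := hQ p (mem_insert_of_mem hp)
      -- choose a coordinate k ∈ {i,j} avoiding {p.1, p.2}
      obtain ⟨k, hk1, hk2, hk3⟩ : ∃ k : Fin n, (k = i ∨ k = j) ∧ k ≠ p.1 ∧ k ≠ p.2 := by
        by_cases hi1 : i = p.1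
        · refine ⟨j, Or.inr rfl, ?_, ?_⟩
          · rw [← hi1]; exact (ne_of_gt hij)
          · intro hj2
            exact hap (Prod.ext hi1 hj2)
        · by_cases hi2 : i = p.2
          · refine ⟨j, Or.inr rfl, ?_, ?_⟩
            · intro hj1; rw [hj1] at hij; rw [hi2] at hij
              exact absurd (hpij.trans hij) (lt_irrefl _)
            · intro hj2; rw [hj2] at hij; rw [hi2] at hij
              exact absurd hij (lt_irrefl _)
          · exact ⟨i, Or.inl rfl, hi1, hi2⟩
      set e2 : Fin n → ℂ := Pi.single k 1 with he2
      have he2p1 : e2 p.1 = 0 := Pi.single_eq_of_ne (Ne.symm hk2) 1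
      have he2p2 : e2 p.2 = 0 := Pi.single_eq_of_ne (Ne.symm hk3) 1
      have he2ij : e2 i - e2 j = 1 ∨ e2 i - e2 j = -1 := by
        rcases hk1 with rfl | rfl
        · left; rw [he2]; simp [Pi.single_eq_same, Pi.single_eq_of_ne (Ne.symm hijne)]
        · right; rw [he2]; simp [Pi.single_eq_same, Pi.single_eq_of_ne hijne]
      -- collect the eventual facts in a metric ball
      have hcomb : ∀ᶠ z : Fin n → ℂ in nhds c,
          (H z = (z i - z j) * K₁ z) ∧ (z p.1 = z p.2 → H z = 0) ∧ AnalyticAt ℂ K₁ z :=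
        heq'.and ((hvan p (mem_insert_of_mem hp)).and hK₁.eventually_analyticAt)
      obtain ⟨ε, hε, hball⟩ := Metric.eventually_nhds_iff.mp hcomb
      refine Metric.eventually_nhds_iff.mpr ⟨ε, hε, ?_⟩
      intro z hz hzp
      obtain ⟨hz1, hz2, hz3⟩ := hball hz
      by_cases hzij : z i = z j
      · -- limit argument along z + t • e2
        have hKcont : ContinuousAt K₁ z := hz3.continuousAt
        have htendz : Filter.Tendsto (fun t : ℂ => z + t • e2)
            (nhdsWithin 0 ({0}ᶜ : Set ℂ)) (nhds z) := by
          have hcont : Continuous fun t : ℂ => z + t • e2 :=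
            continuous_const.add (continuous_id.smul continuous_const)
          have h0 := hcont.tendsto 0
          simp only [zero_smul, add_zero] at h0
          exact h0.mono_left nhdsWithin_le_nhds
        have hev0 : ∀ᶠ t : ℂ in nhdsWithin 0 ({0}ᶜ : Set ℂ), K₁ (z + t • e2) = 0 := by
          have hcont : Continuous fun t : ℂ => z + t • e2 :=
            continuous_const.add (continuous_id.smul continuous_const)
          have h0 := hcont.tendsto 0
          simp only [zero_smul, add_zero] at h0
          have hsmall : ∀ᶠ t : ℂ in nhds 0, (z + t • e2) ∈ Metric.ball c ε :=
            h0.eventually (Metric.isOpen_ball.eventually_mem (Metric.mem_ball.mpr hz))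
          filter_upwards [hsmall.filter_mono nhdsWithin_le_nhds, self_mem_nhdsWithin]
            with t hta htb
          have htne : t ≠ 0 := fun h => htb (by simp [h])
          obtain ⟨hz1', hz2', _⟩ := hball (Metric.mem_ball.mp hta)
          have hz'p : (z + t • e2) p.1 = (z + t • e2) p.2 := by
            simp [he2p1, he2p2, hzp]
          have hH' : H (z + t • e2) = 0 := hz2' hz'p
          rw [hH'] at hz1'
          have hfac : (z + t • e2) i - (z + t • e2) j = t * (e2 i - e2 j) := by
            simp only [Pi.add_apply, Pi.smul_apply, smul_eq_mul]
            rw [hzij]; ring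
          have hne : (z + t • e2) i - (z + t • e2) j ≠ 0 := by
            rw [hfac]
            rcases he2ij with h | h <;> rw [h] <;> simpa using htne
          rcases mul_eq_zero.mp hz1'.symm with h | h
          · exact absurd h hne
          · exact h
        have h1 : Filter.Tendsto (fun t : ℂ => K₁ (z + t • e2))
            (nhdsWithin 0 ({0}ᶜ : Set ℂ)) (nhds (K₁ z)) :=
          (hKcont.tendsto.comp htendz)
        have h2 : Filter.Tendsto (fun t : ℂ => K₁ (z + t • e2))
            (nhdsWithin 0 ({0}ᶜ : Set ℂ)) (nhds 0) :=
          Filter.Tendsto.congr' (Filter.EventuallyEq.symm hev0) tendsto_const_nhds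
        exact tendsto_nhds_unique h1 h2
      · -- direct argument
        have hH0 : H z = 0 := hz2 hzp
        rw [hH0] at hz1
        rcases mul_eq_zero.mp hz1.symm with h | h
        · exact absurd (sub_eq_zero.mp h) hzij
        · exact h
    obtain ⟨K, hK, heq2⟩ := ih hK₁ (fun p hp => hQ p (mem_insert_of_mem hp)) hvan'
    refine ⟨K, hK, ?_⟩
    filter_upwards [heq', heq2] with z h1 h2
    rw [Finset.prod_insert ha, h1, h2]
    ring

end Multi
section Sym

open Equiv Finset

variable {n : ℕ}

/-- The set of increasing pairs. -/
def allPairs (n : ℕ) : Finset (Fin n × Fin n) :=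
  Finset.univ.filter (fun p => p.1 < p.2)

lemma prod_allPairs (h : Fin n × Fin n → ℂ) :
    ∏ p ∈ allPairs n, h p = ∏ i : Fin n, ∏ j ∈ Finset.Ioi i, h (i, j) := by
  rw [allPairs, Finset.prod_filter, ← Finset.univ_product_univ, Finset.prod_product]
  refine Finset.prod_congr rfl fun i _ => ?_
  rw [← Finset.prod_filter]
  congr 1
  ext j
  simp

lemma vandermonde_perm (z : Fin n → ℂ) (σ : Equiv.Perm (Fin n)) :
    ∏ p ∈ allPairs n, (z (σ p.1) - z (σ p.2))
      = ((Equiv.Perm.sign σ : ℤ) : ℂ) * ∏ p ∈ allPairs n, (z p.1 - z p.2) := by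
  have h1 : ∀ y : Fin n → ℂ,
      ∏ p ∈ allPairs n, (y p.2 - y p.1) = (Matrix.vandermonde y).det := by
    intro y
    rw [Matrix.det_vandermonde, prod_allPairs (fun p => y p.2 - y p.1)]
  have h2 : Matrix.vandermonde (fun i => z (σ i)) = (Matrix.vandermonde z).submatrix σ id := by
    ext i j
    simp [Matrix.vandermonde, Matrix.submatrix]
  have h3 := Matrix.det_permute σ (Matrix.vandermonde z)
  have hflip : ∀ y : Fin n → ℂ, ∏ p ∈ allPairs n, (y p.1 - y p.2)
      = (-1 : ℂ) ^ (allPairs n).card * ∏ p ∈ allPairs n, (y p.2 - y p.1) := by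
    intro y
    rw [← Finset.prod_const, ← Finset.prod_mul_distrib]
    exact Finset.prod_congr rfl fun p _ => by ring
  have h1σ : ∏ p ∈ allPairs n, (z (σ p.2) - z (σ p.1))
      = (Matrix.vandermonde fun i => z (σ i)).det := h1 (fun i => z (σ i))
  have hflipσ : ∏ p ∈ allPairs n, (z (σ p.1) - z (σ p.2))
      = (-1 : ℂ) ^ (allPairs n).card * ∏ p ∈ allPairs n, (z (σ p.2) - z (σ p.1)) :=
    hflip (fun i => z (σ i))
  rw [hflipσ, hflip z, h1σ, h1, h2, h3]
  ring

end Sym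
/-- The symmetrization `f_P = (1/n!) ∑_{σ} f(z_{σ(1)},…,z_{σ(n)})/∏_{(a,b)∈P}(z_{σ(a)}-z_{σ(b)})`
of an analytic function `f` near `(1,…,1)` extends to an analytic function near `(1,…,1)`. -/
theorem stmt_5 (n : ℕ) (f : (Fin n → ℂ) → ℂ)
    (hf : AnalyticAt ℂ f (fun _ => 1))
    (P : Finset (Fin n × Fin n)) (hP : ∀ p ∈ P, p.1 < p.2) :
    ∃ g : (Fin n → ℂ) → ℂ, AnalyticAt ℂ g (fun _ => 1) ∧
      ∀ᶠ z : Fin n → ℂ in nhds (fun _ => 1), Function.Injective z →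
        g z = ((n.factorial : ℂ))⁻¹ *
          ∑ σ : Equiv.Perm (Fin n),
            f (z ∘ σ) / ∏ p ∈ P, (z (σ p.1) - z (σ p.2)) := by
  classical
  set c : Fin n → ℂ := fun _ => 1 with hc
  have hPsub : P ⊆ allPairs n := fun p hp => Finset.mem_filter.mpr ⟨Finset.mem_univ _, hP p hp⟩
  set R : Finset (Fin n × Fin n) := allPairs n \ P with hR
  set H : (Fin n → ℂ) → ℂ := fun z => ∑ σ : Equiv.Perm (Fin n),
    ((Equiv.Perm.sign σ : ℤ) : ℂ) * (f (z ∘ σ) * ∏ p ∈ R, (z (σ p.1) - z (σ p.2))) with hH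
  -- analyticity of H
  have hHa : AnalyticAt ℂ H c := by
    apply Finset.analyticAt_fun_sum
    intro σ _
    apply AnalyticAt.mul analyticAt_const
    apply AnalyticAt.mul
    · -- f (z ∘ σ)
      set L : (Fin n → ℂ) →L[ℂ] (Fin n → ℂ) := ContinuousLinearMap.pi
        (fun i => ContinuousLinearMap.proj (R := ℂ) (φ := fun _ : Fin n => ℂ) (σ i)) with hL
      have hLc : L c = c := by
        funext i
        simp [hL, ContinuousLinearMap.pi_apply, hc]
      have hfL : AnalyticAt ℂ f (L c) := by rw [hLc]; exact hf
      have h1 := AnalyticAt.comp (g := f) (f := fun z => L z) (x := c) (by exact hfL)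
        (L.analyticAt c)
      have h2 : (fun z : Fin n → ℂ => f (L z)) = fun z => f (z ∘ σ) := by
        funext z
        congr 1
      rw [Function.comp_def] at h1
      rwa [h2] at h1
    · apply Finset.analyticAt_fun_prod
      intro p _
      exact (ContinuousLinearMap.proj (R := ℂ)
        (φ := fun _ : Fin n => ℂ) (σ p.1)).analyticAt c |>.sub
        ((ContinuousLinearMap.proj (R := ℂ) (φ := fun _ : Fin n => ℂ) (σ p.2)).analyticAt c)
  -- alternation of H
  have halt : ∀ (τ : Equiv.Perm (Fin n)) (z : Fin n → ℂ),
      H (z ∘ τ) = ((Equiv.Perm.sign τ : ℤ) : ℂ) * H z := by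
    intro τ z
    set T : Equiv.Perm (Fin n) → ℂ := fun ρ =>
      ((Equiv.Perm.sign ρ : ℤ) : ℂ) * (f (z ∘ ρ) * ∏ p ∈ R, (z (ρ p.1) - z (ρ p.2))) with hT
    have key : ∀ σ : Equiv.Perm (Fin n),
        ((Equiv.Perm.sign σ : ℤ) : ℂ) *
            (f ((z ∘ τ) ∘ σ) * ∏ p ∈ R, ((z ∘ τ) (σ p.1) - (z ∘ τ) (σ p.2)))
          = ((Equiv.Perm.sign τ : ℤ) : ℂ) * T (τ * σ) := by
      intro σ
      have h1 : (z ∘ τ) ∘ σ = z ∘ (τ * σ) := by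
        funext x; simp [Equiv.Perm.mul_apply]
      have h2 : ∏ p ∈ R, ((z ∘ τ) (σ p.1) - (z ∘ τ) (σ p.2))
          = ∏ p ∈ R, (z ((τ * σ) p.1) - z ((τ * σ) p.2)) := by
        refine Finset.prod_congr rfl fun p _ => by simp [Equiv.Perm.mul_apply]
      have hsgn : ((Equiv.Perm.sign τ : ℤ) : ℂ) * ((Equiv.Perm.sign (τ * σ) : ℤ) : ℂ)
          = ((Equiv.Perm.sign σ : ℤ) : ℂ) := by
        rw [Equiv.Perm.sign_mul]
        push_cast
        rcases Int.units_eq_one_or (Equiv.Perm.sign τ) with h | h <;> rw [h] <;> push_cast <;> ring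
      rw [hT]
      simp only
      rw [h1, h2]
      conv_rhs => rw [← mul_assoc, hsgn]
    rw [hH]
    simp only
    rw [Finset.sum_congr rfl fun σ _ => key σ, ← Finset.mul_sum]
    congr 1
    exact Fintype.sum_equiv (Equiv.mulLeft τ) (fun σ => T (τ * σ)) (fun σ => T σ)
      (fun σ => rfl)
  -- H vanishes on all diagonal hyperplanes
  have hvan : ∀ p ∈ allPairs n, ∀ z : Fin n → ℂ, z p.1 = z p.2 → H z = 0 := by
    intro p hp z hz
    have hlt : p.1 < p.2 := (Finset.mem_filter.mp hp).2
    have hne : p.1 ≠ p.2 := ne_of_lt hlt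
    have hzτ : z ∘ (Equiv.swap p.1 p.2) = z := by
      funext x
      simp only [Function.comp_apply]
      rcases eq_or_ne x p.1 with rfl | h1
      · rw [Equiv.swap_apply_left]; exact hz.symm
      · rcases eq_or_ne x p.2 with rfl | h2
        · rw [Equiv.swap_apply_right]; exact hz
        · rw [Equiv.swap_apply_of_ne_of_ne h1 h2]
    have h := halt (Equiv.swap p.1 p.2) z
    rw [hzτ, Equiv.Perm.sign_swap hne] at h
    have hcast : ((((-1 : ℤˣ) : ℤ)) : ℂ) = -1 := by norm_num
    rw [hcast] at h
    have h2 : (2 : ℂ) * H z = 0 := by linear_combination h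
    rcases mul_eq_zero.mp h2 with h3 | h3
    · exact absurd h3 two_ne_zero
    · exact h3
  -- divide H by the full Vandermonde product
  obtain ⟨K, hK, heqH⟩ := multi_div (allPairs n) hHa
    (fun p hp => (Finset.mem_filter.mp hp).2)
    (fun p hp => Eventually.of_forall fun z => hvan p hp z)
  refine ⟨fun z => ((n.factorial : ℂ))⁻¹ * K z, analyticAt_const.mul hK, ?_⟩
  filter_upwards [heqH] with z hz hinj
  congr 1
  -- show K z equals the symmetrized sum
  have hVne : (∏ p ∈ allPairs n, (z p.1 - z p.2)) ≠ 0 := by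
    rw [Finset.prod_ne_zero_iff]
    intro p hp
    exact sub_ne_zero.mpr fun h => (ne_of_lt (Finset.mem_filter.mp hp).2) (hinj h)
  have hmain : (∏ p ∈ allPairs n, (z p.1 - z p.2)) *
      (∑ σ : Equiv.Perm (Fin n), f (z ∘ σ) / ∏ p ∈ P, (z (σ p.1) - z (σ p.2))) = H z := by
    rw [Finset.mul_sum, hH]
    simp only
    refine Finset.sum_congr rfl fun σ _ => ?_
    have hD : (∏ p ∈ P, (z (σ p.1) - z (σ p.2))) ≠ 0 := by
      rw [Finset.prod_ne_zero_iff]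
      intro p hp
      refine sub_ne_zero.mpr fun h => ?_
      exact (ne_of_lt (hP p hp)) (σ.injective (hinj h))
    have hsplit : (∏ p ∈ R, (z (σ p.1) - z (σ p.2))) * (∏ p ∈ P, (z (σ p.1) - z (σ p.2)))
        = ∏ p ∈ allPairs n, (z (σ p.1) - z (σ p.2)) :=
      Finset.prod_sdiff hPsub
    have hsign := vandermonde_perm z σ
    have hs2 : ((Equiv.Perm.sign σ : ℤ) : ℂ) * ((Equiv.Perm.sign σ : ℤ) : ℂ) = 1 := by
      rcases Int.units_eq_one_or (Equiv.Perm.sign σ) with h | h <;> rw [h] <;> norm_num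
    have hV : (∏ p ∈ allPairs n, (z p.1 - z p.2))
        = ((Equiv.Perm.sign σ : ℤ) : ℂ) *
          ((∏ p ∈ R, (z (σ p.1) - z (σ p.2))) * (∏ p ∈ P, (z (σ p.1) - z (σ p.2)))) := by
      rw [hsplit]
      calc (∏ p ∈ allPairs n, (z p.1 - z p.2))
          = (((Equiv.Perm.sign σ : ℤ) : ℂ) * ((Equiv.Perm.sign σ : ℤ) : ℂ)) *
            (∏ p ∈ allPairs n, (z p.1 - z p.2)) := by rw [hs2, one_mul]
        _ = ((Equiv.Perm.sign σ : ℤ) : ℂ) * (∏ p ∈ allPairs n, (z (σ p.1) - z (σ p.2))) := by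
            rw [mul_assoc, ← hsign]
    rw [hV]
    field_simp
  rw [← hmain] at hz
  exact (mul_left_cancel₀ hVne hz).symm
end

section
/- For a compactly supported probability measure m on ℝ with moments M_k(m), and H_m(u) = ∫_0^{ln u} R_m(t) dt + ln(ln(u)/(u-1)) (as a power series in u-1), one has for every k ≥ 1: M_k(m) = ∑_{ℓ=0}^{k} (k! / (ℓ! (ℓ+1)! (k-ℓ)!)) · (∂^ℓ/∂u^ℓ)[u^k (H_m'(u))^{k-ℓ}] evaluated at u = 1. -/
set_option maxHeartbeats 1000000

open Filter MeasureTheory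

open Topology

namespace Stmt9

noncomputable def tc (f : ℝ → ℝ) (c : ℝ) (n : ℕ) : ℝ := iteratedDeriv n f c / n.factorial

lemma tc_congr {f g : ℝ → ℝ} {c : ℝ} (h : f =ᶠ[𝓝 c] g) (n : ℕ) : tc f c n = tc g c n := by
  unfold tc; rw [h.iteratedDeriv_eq]

lemma tc_zero (f : ℝ → ℝ) (c : ℝ) : tc f c 0 = f c := by
  simp [tc, iteratedDeriv_zero]

lemma fac_ne (n : ℕ) : (n.factorial : ℝ) ≠ 0 := by
  exact_mod_cast n.factorial_ne_zero

lemma tc_deriv (f : ℝ → ℝ) (c : ℝ) (n : ℕ) : tc (deriv f) c n = (n + 1) * tc f c (n + 1) := by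
  unfold tc
  rw [← iteratedDeriv_succ', Nat.factorial_succ]
  push_cast
  have h : ((n:ℝ)+1) ≠ 0 := by positivity
  field_simp

lemma tc_coeff {f : ℝ → ℝ} {p : FormalMultilinearSeries ℝ ℝ ℝ} {c : ℝ}
    (h : HasFPowerSeriesAt f p c) (n : ℕ) : tc f c n = p.coeff n := by
  obtain ⟨r, hr⟩ := h
  have h2 := hr.factorial_smul (1 : ℝ) n
  unfold tc
  rw [iteratedDeriv_eq_iteratedFDeriv, ← h2]
  simp only [FormalMultilinearSeries.coeff, nsmul_eq_mul]
  rw [mul_div_cancel_left₀ _ (fac_ne n)]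
  rfl

lemma tc_add {f g : ℝ → ℝ} {c : ℝ} (hf : AnalyticAt ℝ f c) (hg : AnalyticAt ℝ g c) (n : ℕ) :
    tc (fun x => f x + g x) c n = tc f c n + tc g c n := by
  obtain ⟨pf, hpf⟩ := hf
  obtain ⟨pg, hpg⟩ := hg
  have h3 : tc (f + g) c n = (pf + pg).coeff n := tc_coeff (hpf.add hpg) n
  rw [tc_coeff hpf, tc_coeff hpg, show (fun x => f x + g x) = f + g from rfl, h3]
  rfl

lemma iteratedDerivWithin_of_isOpen' {f : ℝ → ℝ} {s : Set ℝ} (n : ℕ) (hs : IsOpen s) {x : ℝ}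
    (hx : x ∈ s) : iteratedDerivWithin n f s x = iteratedDeriv n f x := by
  simp only [iteratedDerivWithin, iteratedDeriv, iteratedFDerivWithin_of_isOpen n hs hx]

lemma tc_const_mul {f : ℝ → ℝ} {c : ℝ} (hf : AnalyticAt ℝ f c) (a : ℝ) (n : ℕ) :
    tc (fun x => a * f x) c n = a * tc f c n := by
  unfold tc
  obtain ⟨s, hs, hOn⟩ := hf.exists_mem_nhds_analyticOnNhd
  obtain ⟨t, hts, hto, hct⟩ := mem_nhds_iff.mp hs
  have hu : UniqueDiffOn ℝ t := hto.uniqueDiffOn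
  have hcd : ContDiffOn ℝ n f t := ((hOn.mono hts).contDiffOn hu).of_le le_top
  rw [← iteratedDerivWithin_of_isOpen' (f := fun x => a * f x) n hto hct,
    ← iteratedDerivWithin_of_isOpen' (f := f) n hto hct,
    iteratedDerivWithin_const_mul hct hu a (hcd.contDiffWithinAt hct)]
  ring

lemma iteratedDeriv_const' (n : ℕ) (a c : ℝ) :
    iteratedDeriv n (fun _ : ℝ => a) c = if n = 0 then a else 0 := by
  induction n generalizing a c with
  | zero => simp
  | succ n ih =>
    rw [iteratedDeriv_succ']
    have : deriv (fun _ : ℝ => a) = fun _ : ℝ => (0 : ℝ) := by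
      funext y; exact deriv_const y a
    rw [this, ih]
    simp

lemma tc_const (a c : ℝ) (n : ℕ) : tc (fun _ : ℝ => a) c n = if n = 0 then a else 0 := by
  unfold tc
  rw [iteratedDeriv_const']
  split <;> simp_all

lemma tc_sum {ι : Type*} (s : Finset ι) {F : ι → ℝ → ℝ} {c : ℝ}
    (hF : ∀ i ∈ s, AnalyticAt ℝ (F i) c) (n : ℕ) :
    tc (fun x => ∑ i ∈ s, F i x) c n = ∑ i ∈ s, tc (F i) c n := by
  classical
  induction s using Finset.induction_on with
  | empty => simp [tc_const]
  | @insert i s hi ih =>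
    rw [Finset.sum_insert hi]
    have h1 : AnalyticAt ℝ (F i) c := hF i (Finset.mem_insert_self i s)
    have h2 : AnalyticAt ℝ (fun x => ∑ j ∈ s, F j x) c :=
      Finset.analyticAt_fun_sum s fun j hj => hF j (Finset.mem_insert_of_mem hj)
    have he : (fun x => ∑ j ∈ insert i s, F j x) = fun x => F i x + ∑ j ∈ s, F j x := by
      funext x; rw [Finset.sum_insert hi]
    rw [he, tc_add h1 h2 n, ih (fun j hj => hF j (Finset.mem_insert_of_mem hj))]



lemma tc_one (f : ℝ → ℝ) (c : ℝ) : tc f c 1 = deriv f c := by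
  simp [tc, iteratedDeriv_one]

lemma tc_iteratedDeriv (f : ℝ → ℝ) (c : ℝ) (n : ℕ) :
    iteratedDeriv n f c = n.factorial * tc f c n := by
  unfold tc
  field_simp

lemma analyticAt_deriv {A : ℝ → ℝ} {c : ℝ} (hA : AnalyticAt ℝ A c) :
    AnalyticAt ℝ (deriv A) c := by
  obtain ⟨s, hs, hOn⟩ := hA.exists_mem_nhds_analyticOnNhd
  exact hOn.deriv c (mem_of_mem_nhds hs)

lemma tc_shift_zero {A : ℝ → ℝ} {c : ℝ} : tc (fun x => (x - c) * A x) c 0 = 0 := by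
  rw [tc_zero]; simp

lemma tc_shift {c : ℝ} : ∀ (n : ℕ) (A : ℝ → ℝ), AnalyticAt ℝ A c →
    tc (fun x => (x - c) * A x) c (n + 1) = tc A c n := by
  intro n
  induction n with
  | zero =>
    intro A hA
    have h1 : deriv (fun x => (x - c) * A x) c = A c := by
      have := (((hasDerivAt_id c).sub_const c).mul hA.differentiableAt.hasDerivAt).deriv
      simp only [id_eq] at this
      rw [show (fun x => (x - c) * A x) = (fun x => x - c) * A from rfl, this]; simp
    have h2 : tc (fun x => (x - c) * A x) c 1 = deriv (fun x => (x - c) * A x) c := by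
      have := tc_deriv (fun x => (x - c) * A x) c 0
      rw [tc_zero] at this
      simpa using this.symm
    rw [h2, h1, tc_zero]
  | succ n ih =>
    intro A hA
    have hA' : AnalyticAt ℝ (deriv A) c := analyticAt_deriv hA
    have hxA' : AnalyticAt ℝ (fun x => (x - c) * deriv A x) c :=
      ((analyticAt_id.sub analyticAt_const).mul hA')
    have hdF : deriv (fun x => (x - c) * A x) =ᶠ[𝓝 c] fun x => A x + (x - c) * deriv A x := by
      filter_upwards [hA.eventually_analyticAt] with y hy
      have := (((hasDerivAt_id y).sub_const c).mul hy.differentiableAt.hasDerivAt).deriv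
      simp only [id_eq] at this
      rw [show (fun x => (x - c) * A x) = (fun x => x - c) * A from rfl, this]; ring
    have key : tc (deriv (fun x => (x - c) * A x)) c (n + 1) = (n + 2) * tc A c (n + 1) := by
      rw [tc_congr hdF, tc_add hA hxA', ih (deriv A) hA', tc_deriv]
      push_cast; ring
    have h3 := tc_deriv (fun x => (x - c) * A x) c (n + 1)
    rw [key] at h3
    have h4 : ((n : ℝ) + 1 + 1) ≠ 0 := by positivity
    apply mul_left_cancel₀ h4
    push_cast at h3 ⊢
    linarith [h3]

lemma tc_pow_shift {c : ℝ} : ∀ (j : ℕ) {A : ℝ → ℝ}, AnalyticAt ℝ A c → ∀ (n : ℕ),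
    tc (fun x => (x - c) ^ j * A x) c n = if j ≤ n then tc A c (n - j) else 0 := by
  intro j
  induction j with
  | zero =>
    intro A hA n
    have he : (fun x => (x - c) ^ 0 * A x) =ᶠ[𝓝 c] A := by filter_upwards with x; simp
    rw [tc_congr he]
    simp
  | succ j ih =>
    intro A hA n
    have hB : AnalyticAt ℝ (fun x => (x - c) ^ j * A x) c :=
      ((analyticAt_id.sub analyticAt_const).pow j).mul hA
    have he : (fun x => (x - c) ^ (j + 1) * A x)
        =ᶠ[𝓝 c] fun x => (x - c) * ((x - c) ^ j * A x) := by
      filter_upwards with x; ring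
    rw [tc_congr he]
    cases n with
    | zero => rw [tc_shift_zero]; simp
    | succ m =>
      rw [tc_shift m _ hB, ih hA m]
      by_cases h : j ≤ m
      · rw [if_pos h, if_pos (by omega)]
        congr 1; omega
      · rw [if_neg h, if_neg (by omega)]

lemma tc_factor {A : ℝ → ℝ} {c : ℝ} (hA : AnalyticAt ℝ A c) (m : ℕ)
    (h : ∀ i, i < m → tc A c i = 0) :
    ∃ B, AnalyticAt ℝ B c ∧ A =ᶠ[𝓝 c] fun x => (x - c) ^ m * B x := by
  by_cases htop : analyticOrderAt A c = ⊤
  · refine ⟨fun _ => 0, analyticAt_const, ?_⟩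
    filter_upwards [analyticOrderAt_eq_top.mp htop] with x hx
    simp [hx]
  · obtain ⟨n, hn⟩ := WithTop.ne_top_iff_exists.mp htop
    obtain ⟨g, hg, hgc, heq⟩ := (hA.analyticOrderAt_eq_natCast).mp hn.symm
    have heq' : A =ᶠ[𝓝 c] fun x => (x - c) ^ n * g x := by
      filter_upwards [heq] with x hx; rw [hx]; simp [smul_eq_mul]
    have hmn : m ≤ n := by
      by_contra h'
      push_neg at h'
      have h0 := h n h'
      rw [tc_congr heq', tc_pow_shift n hg n, if_pos le_rfl, Nat.sub_self, tc_zero] at h0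
      exact hgc h0
    refine ⟨fun x => (x - c) ^ (n - m) * g x, ((analyticAt_id.sub analyticAt_const).pow _).mul hg, ?_⟩
    filter_upwards [heq'] with x hx
    rw [hx, ← mul_assoc, ← pow_add]
    congr 2
    omega


lemma tc_pow_shift0 {A : ℝ → ℝ} (hA : AnalyticAt ℝ A 0) (j n : ℕ) :
    tc (fun x => x ^ j * A x) 0 n = if j ≤ n then tc A 0 (n - j) else 0 := by
  have he : (fun x => x ^ j * A x) =ᶠ[𝓝 (0:ℝ)] fun x => (x - 0) ^ j * A x := by
    filter_upwards with x; rw [sub_zero]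
  rw [tc_congr he, tc_pow_shift j hA n]

/-- Residue of an exact derivative vanishes: coefficient form. -/
lemma tc_rho {B : ℝ → ℝ} (hB : AnalyticAt ℝ B 0) (hB0 : B 0 ≠ 0) (s : ℕ) :
    tc (fun x => (B x + x * deriv B x) * ((B x)⁻¹) ^ (s + 2)) 0 (s + 1) = 0 := by
  set r : ℕ := s + 1 with hr
  have hBinv : AnalyticAt ℝ (fun x => (B x)⁻¹) 0 := hB.inv hB0
  set C : ℝ → ℝ := fun x => ((B x)⁻¹) ^ r with hCdef
  have hC : AnalyticAt ℝ C 0 := hBinv.pow r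
  have hCd : AnalyticAt ℝ (deriv C) 0 := analyticAt_deriv hC
  have hBne : ∀ᶠ x in 𝓝 (0:ℝ), B x ≠ 0 := hB.continuousAt.eventually_ne hB0
  have step1 : deriv C =ᶠ[𝓝 (0:ℝ)] fun x => -(r:ℝ) * ((B x)⁻¹) ^ (r + 1) * deriv B x := by
    filter_upwards [hBne, hB.eventually_analyticAt] with y hy hAy
    have h1 : HasDerivAt B (deriv B y) y := hAy.differentiableAt.hasDerivAt
    have h2 : HasDerivAt (fun x => (B x)⁻¹) (-deriv B y / B y ^ 2) y := h1.inv hy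
    have h3 := (h2.pow r).deriv
    rw [hCdef]
    rw [show (fun x => (B x)⁻¹ ^ r) = (fun x => (B x)⁻¹) ^ r from rfl, h3]
    have e1 : (B y)⁻¹ ^ (r + 1) = (B y)⁻¹ ^ (r - 1) * ((B y) ^ 2)⁻¹ := by
      rw [← inv_pow, ← pow_add]
      congr 1
    rw [e1, div_eq_mul_inv]
    ring
  have step2 : (fun x => (B x + x * deriv B x) * ((B x)⁻¹) ^ (s + 2))
      =ᶠ[𝓝 (0:ℝ)] fun x => C x + (-(1:ℝ)/r) * (x * deriv C x) := by
    filter_upwards [hBne, step1] with y hy h1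
    have hinv : B y * (B y)⁻¹ = 1 := mul_inv_cancel₀ hy
    have hrne : (r:ℝ) ≠ 0 := by positivity
    have e3 : (-(1:ℝ)/r) * (y * (-(r:ℝ) * (B y)⁻¹ ^ (r+1) * deriv B y))
        = y * deriv B y * ((B y)⁻¹ * (B y)⁻¹ ^ r) := by
      rw [← pow_succ']
      field_simp
    rw [h1, e3, show s + 2 = r + 1 from by omega, pow_succ', hCdef]
    rw [add_mul, ← mul_assoc, hinv, one_mul]
  have hxC : AnalyticAt ℝ (fun x : ℝ => x * deriv C x) 0 := by
    exact AnalyticAt.mul analyticAt_id hCd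
  have hG : AnalyticAt ℝ (fun x : ℝ => (-(1:ℝ)/r) * (x * deriv C x)) 0 := by
    exact AnalyticAt.mul analyticAt_const hxC
  rw [tc_congr step2, tc_add hC hG (s+1)]
  have h5 : tc (fun x => (-(1:ℝ)/r) * (x * deriv C x)) 0 (s + 1)
      = (-(1:ℝ)/r) * tc (fun x => x * deriv C x) 0 (s + 1) :=
    tc_const_mul hxC _ _
  have h6 : tc (fun x => x * deriv C x) 0 (s + 1) = tc (deriv C) 0 s := by
    have he : (fun x => x * deriv C x) =ᶠ[𝓝 (0:ℝ)] fun x => x ^ 1 * deriv C x := by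
      filter_upwards with x; rw [pow_one]
    rw [tc_congr he, tc_pow_shift0 hCd 1 (s+1), if_pos (by omega), Nat.add_sub_cancel]
  have h7 : tc (deriv C) 0 s = (r:ℝ) * tc C 0 r := by
    rw [tc_deriv]; norm_num [hr]
  rw [h5, h6, h7]
  have hrne : (r:ℝ) ≠ 0 := by positivity
  have : tc C 0 r = tc C 0 (s+1) := by rw [hr]
  rw [this]
  field_simp
  ring


lemma inv_pow_cancel {a : ℝ} (ha : a ≠ 0) {i n : ℕ} (h : i ≤ n) :
    a ^ i * (a⁻¹) ^ n = (a⁻¹) ^ (n - i) := by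
  have : (a⁻¹) ^ n = (a⁻¹) ^ i * (a⁻¹) ^ (n - i) := by rw [← pow_add]; congr 1; omega
  rw [this, ← mul_assoc, ← mul_pow, mul_inv_cancel₀ ha, one_pow, one_mul]

/-- The substitution/residue lemma: the `(m-1)`-st Taylor coefficient at `0` of
`Q(e^x) e^x (x/(e^x-1))^m / x^m`-style expression equals the `(m-1)`-st coefficient of `Q` at 1. -/
lemma tc_sub {Q : ℝ → ℝ} (hQ : AnalyticAt ℝ Q 1) {e₁ : ℝ → ℝ} (he₁ : AnalyticAt ℝ e₁ 0)
    (he₁0 : e₁ 0 = 1) (hEe : (fun x => Real.exp x - 1) =ᶠ[𝓝 (0:ℝ)] fun x => x * e₁ x)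
    (t : ℕ) :
    tc (fun x => Q (Real.exp x) * Real.exp x * ((e₁ x)⁻¹) ^ (t + 1)) 0 t = tc Q 1 t := by
  have he₁ne : ∀ᶠ x in 𝓝 (0:ℝ), e₁ x ≠ 0 :=
    he₁.continuousAt.eventually_ne (by rw [he₁0]; norm_num)
  have he₁d : AnalyticAt ℝ (deriv e₁) 0 := analyticAt_deriv he₁
  -- exp = e₁ + x e₁' near 0
  have hexp : Real.exp =ᶠ[𝓝 (0:ℝ)] fun x => e₁ x + x * deriv e₁ x := by
    have h1 : deriv (fun x => Real.exp x - 1) =ᶠ[𝓝 (0:ℝ)] deriv (fun x => x * e₁ x) :=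
      hEe.deriv
    have h2 : ∀ y : ℝ, deriv (fun x => Real.exp x - 1) y = Real.exp y := by
      intro y
      exact ((Real.hasDerivAt_exp y).sub_const 1).deriv
    have h3 : deriv (fun x => x * e₁ x) =ᶠ[𝓝 (0:ℝ)] fun x => e₁ x + x * deriv e₁ x := by
      filter_upwards [he₁.eventually_analyticAt] with y hy
      have := ((hasDerivAt_id y).mul hy.differentiableAt.hasDerivAt).deriv
      simp only [id_eq] at this
      rw [show (fun x => x * e₁ x) = id * e₁ from rfl, this]; ring
    filter_upwards [h1, h3] with y hy1 hy3
    rw [← hy3, ← hy1, h2]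
  set q : ℕ → ℝ := fun i => tc Q 1 i with hq
  -- decompose Q
  set F : ℕ → ℝ → ℝ := fun i => fun u => q i * ((u - 1) ^ i * 1) with hF
  have hpa : ∀ i : ℕ, AnalyticAt ℝ (fun u : ℝ => (u - 1) ^ i * 1) 1 := by
    intro i
    exact ((analyticAt_id.sub analyticAt_const).pow i).mul analyticAt_const
  have hFA : ∀ i, AnalyticAt ℝ (F i) 1 := by
    intro i
    exact analyticAt_const.mul (hpa i)
  have hsumA : AnalyticAt ℝ (fun u => ∑ i ∈ Finset.range (t+1), F i u) 1 :=
    Finset.analyticAt_fun_sum _ fun i _ => hFA i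
  have hQ0A : AnalyticAt ℝ (fun u => Q u + (-1) * ∑ i ∈ Finset.range (t+1), F i u) 1 :=
    hQ.add (analyticAt_const.mul hsumA)
  have htcF : ∀ i₀ : ℕ, ∀ i ∈ Finset.range (t+1), tc (F i) 1 i₀ = if i = i₀ then q i else 0 := by
    intro i₀ i _
    rw [hF]
    simp only
    rw [tc_const_mul (hpa i) (q i) i₀, tc_pow_shift i analyticAt_const i₀]
    rcases eq_or_ne i i₀ with rfl | hne
    · rw [if_pos rfl, if_pos le_rfl, Nat.sub_self, tc_const, if_pos rfl, mul_one]
    · rw [if_neg hne]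
      by_cases hle : i ≤ i₀
      · rw [if_pos hle, tc_const, if_neg (by omega), mul_zero]
      · rw [if_neg hle, mul_zero]
  have hQ0c : ∀ i, i < t + 1 → tc (fun u => Q u + (-1) * ∑ i ∈ Finset.range (t+1), F i u) 1 i = 0 := by
    intro i hi
    rw [tc_add hQ (analyticAt_const.fun_mul hsumA), tc_const_mul hsumA, tc_sum _ (fun i _ => hFA i)]
    rw [Finset.sum_congr rfl (htcF i), Finset.sum_ite_eq' (Finset.range (t+1)) i (fun i => q i)]
    rw [if_pos (Finset.mem_range.mpr hi)]
    ring
  obtain ⟨Qt, hQtA, hfac⟩ := tc_factor hQ0A (t + 1) hQ0c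
  have hQdec : Q =ᶠ[𝓝 (1:ℝ)] fun u =>
      (∑ i ∈ Finset.range (t+1), q i * (u - 1) ^ i) + (u - 1) ^ (t + 1) * Qt u := by
    filter_upwards [hfac] with u hu
    have : Q u + (-1) * ∑ i ∈ Finset.range (t+1), F i u = (u - 1) ^ (t+1) * Qt u := hu
    rw [hF] at this
    simp only [mul_one] at this
    linarith [this]
  have htendsto : Filter.Tendsto Real.exp (𝓝 (0:ℝ)) (𝓝 (1:ℝ)) := by
    have h := (Real.continuous_exp.continuousAt (x := 0)).tendsto
    rwa [Real.exp_zero] at h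
  have hcomp : ∀ᶠ x in 𝓝 (0:ℝ), Q (Real.exp x) =
      (∑ i ∈ Finset.range (t+1), q i * (Real.exp x - 1) ^ i)
        + (Real.exp x - 1) ^ (t + 1) * Qt (Real.exp x) :=
    htendsto.eventually hQdec
  -- the main pointwise rearrangement
  have main : (fun x => Q (Real.exp x) * Real.exp x * ((e₁ x)⁻¹) ^ (t + 1)) =ᶠ[𝓝 (0:ℝ)]
      fun x => (∑ i ∈ Finset.range (t+1),
          q i * (x ^ i * (Real.exp x * ((e₁ x)⁻¹) ^ (t + 1 - i))))
        + x ^ (t+1) * (Qt (Real.exp x) * Real.exp x) := by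
    filter_upwards [hcomp, hEe, he₁ne] with y h1 h2 h3
    rw [h1, h2]
    rw [add_mul, add_mul, Finset.sum_mul, Finset.sum_mul]
    congr 1
    · refine Finset.sum_congr rfl ?_
      intro i hi
      have hle : i ≤ t + 1 := by
        have := Finset.mem_range.mp hi; omega
      rw [mul_pow, ← inv_pow_cancel h3 hle]
      ring
    · have h4 : e₁ y ^ (t+1) * ((e₁ y)⁻¹) ^ (t+1) = 1 := by
        rw [inv_pow_cancel h3 (le_refl (t+1)), Nat.sub_self, pow_zero]
      rw [mul_pow]
      linear_combination (y ^ (t+1) * Qt (Real.exp y) * Real.exp y) * h4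
  rw [tc_congr main]
  -- analyticity facts
  have hexpA : AnalyticAt ℝ Real.exp (0:ℝ) := analyticAt_rexp
  have hinvA : AnalyticAt ℝ (fun x => (e₁ x)⁻¹) 0 := he₁.inv (by rw [he₁0]; norm_num)
  have hQtexpA : AnalyticAt ℝ (fun x => Qt (Real.exp x)) 0 := by
    have : AnalyticAt ℝ Qt (Real.exp 0) := by rwa [Real.exp_zero]
    exact this.comp analyticAt_rexp
  have hGA : ∀ i : ℕ, AnalyticAt ℝ (fun x => Real.exp x * ((e₁ x)⁻¹) ^ (t + 1 - i)) 0 :=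
    fun i => hexpA.mul (hinvA.pow _)
  have hxGA : ∀ i : ℕ, AnalyticAt ℝ
      (fun x : ℝ => x ^ i * (Real.exp x * ((e₁ x)⁻¹) ^ (t + 1 - i))) 0 := by
    intro i
    exact (analyticAt_id.pow i).mul (hGA i)
  have hterm : ∀ i : ℕ, AnalyticAt ℝ
      (fun x => q i * (x ^ i * (Real.exp x * ((e₁ x)⁻¹) ^ (t + 1 - i)))) 0 := by
    intro i
    exact analyticAt_const.mul (hxGA i)
  have hlastA : AnalyticAt ℝ (fun x => x ^ (t+1) * (Qt (Real.exp x) * Real.exp x)) 0 :=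
    (analyticAt_id.pow _).mul (hQtexpA.mul hexpA)
  rw [tc_add (Finset.analyticAt_fun_sum _ fun i _ => hterm i) hlastA,
    tc_sum _ (fun i _ => hterm i)]
  have hlast : tc (fun x => x ^ (t+1) * (Qt (Real.exp x) * Real.exp x)) 0 t = 0 := by
    rw [tc_pow_shift0 (hQtexpA.fun_mul hexpA) (t+1) t, if_neg (by omega)]
  rw [hlast, add_zero]
  -- evaluate the terms
  have hterm_eval : ∀ i ∈ Finset.range (t+1),
      tc (fun x => q i * (x ^ i * (Real.exp x * ((e₁ x)⁻¹) ^ (t + 1 - i)))) 0 t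
        = if i = t then q t else 0 := by
    intro i hi
    have hit : i ≤ t := by have := Finset.mem_range.mp hi; omega
    rw [tc_const_mul (hxGA i), tc_pow_shift0 (hGA i) i t, if_pos hit]
    rcases eq_or_ne i t with rfl | hne
    · rw [if_pos rfl, Nat.sub_self, tc_zero]
      simp [Real.exp_zero, he₁0]
    · rw [if_neg hne]
      obtain ⟨s, hs⟩ : ∃ s, t - i = s + 1 := ⟨t - i - 1, by omega⟩
      have hs2 : t + 1 - i = s + 2 := by omega
      have hrho := tc_rho he₁ (by rw [he₁0]; norm_num) s
      have heq2 : (fun x => Real.exp x * ((e₁ x)⁻¹) ^ (t + 1 - i)) =ᶠ[𝓝 (0:ℝ)]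
          (fun x => (e₁ x + x * deriv e₁ x) * ((e₁ x)⁻¹) ^ (s + 2)) := by
        filter_upwards [hexp] with y hy
        rw [hs2, hy]
      rw [hs, tc_congr heq2, hrho, mul_zero]
  rw [Finset.sum_congr rfl hterm_eval, Finset.sum_ite_eq' (Finset.range (t+1)) t (fun _ => q t)]
  rw [if_pos (Finset.mem_range.mpr (by omega))]


lemma deriv_of_shift {A B : ℝ → ℝ} (hB : AnalyticAt ℝ B 0)
    (h : A =ᶠ[𝓝 (0:ℝ)] fun x => x * B x) : deriv A 0 = B 0 := by
  rw [h.deriv_eq]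
  have := ((hasDerivAt_id (0:ℝ)).mul hB.differentiableAt.hasDerivAt).deriv
  simp only [id_eq] at this
  rw [show (fun x => x * B x) = id * B from rfl, this]
  simp

lemma deriv_shift_ev {A B : ℝ → ℝ} (hB : AnalyticAt ℝ B 0)
    (h : A =ᶠ[𝓝 (0:ℝ)] fun x => x * B x) :
    deriv A =ᶠ[𝓝 (0:ℝ)] fun x => B x + x * deriv B x := by
  refine h.deriv.trans ?_
  filter_upwards [hB.eventually_analyticAt] with y hy
  have := ((hasDerivAt_id y).mul hy.differentiableAt.hasDerivAt).deriv
  simp only [id_eq] at this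
  rw [show (fun x => x * B x) = id * B from rfl, this]
  ring


lemma build_S (M : ℕ → ℝ) (K : ℝ) (hK1 : 1 ≤ K) (hMb : ∀ j, |M j| ≤ K ^ j) :
    ∃ S : ℝ → ℝ, AnalyticAt ℝ S 0 ∧ (∀ᶠ w in 𝓝 (0:ℝ), S w = ∑' j : ℕ, M j * w ^ (j+1)) ∧
      (tc S 0 0 = 0) ∧ (∀ j, tc S 0 (j+1) = M j) := by
  have hK0 : (0:ℝ) < K := lt_of_lt_of_le one_pos hK1
  set a : ℕ → ℝ := fun n => match n with | 0 => 0 | Nat.succ j => M j with ha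
  have hab : ∀ n, |a n| ≤ K ^ n := by
    intro n
    match n with
    | 0 => simp [ha]
    | Nat.succ j =>
      calc |a (j+1)| = |M j| := rfl
      _ ≤ K ^ j := hMb j
      _ ≤ K ^ (j+1) := pow_le_pow_right₀ hK1 (Nat.le_succ j)
  set p : FormalMultilinearSeries ℝ ℝ ℝ := FormalMultilinearSeries.ofScalars ℝ a with hp
  have hpn : ∀ n, ‖p n‖ = |a n| := by
    intro n
    rw [hp, FormalMultilinearSeries.ofScalars_norm]
    rfl
  set r : NNReal := Real.toNNReal K⁻¹ with hr
  have hrc : (r : ℝ) = K⁻¹ := Real.coe_toNNReal _ (by positivity)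
  have hbd : ∀ n, ‖p n‖ * (r:ℝ) ^ n ≤ 1 := by
    intro n
    rw [hpn, hrc]
    calc |a n| * (K⁻¹) ^ n ≤ K ^ n * (K⁻¹) ^ n := by
          apply mul_le_mul_of_nonneg_right (hab n) (by positivity)
    _ = 1 := by
          rw [← mul_pow, mul_inv_cancel₀ (ne_of_gt hK0), one_pow]
  have hrad : (r : ENNReal) ≤ p.radius := p.le_radius_of_bound 1 hbd
  have hrpos : (0 : ENNReal) < r := by
    rw [ENNReal.coe_pos]
    have : (0:ℝ) < (r:ℝ) := by rw [hrc]; positivity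
    exact_mod_cast this
  have hppos : 0 < p.radius := lt_of_lt_of_le hrpos hrad
  have hball := p.hasFPowerSeriesOnBall hppos
  refine ⟨p.sum, ⟨p, hball.hasFPowerSeriesAt⟩, ?_, ?_, ?_⟩
  · filter_upwards [EMetric.ball_mem_nhds (0:ℝ) hppos] with w hw
    have hs0 := hball.hasSum (y := w) (by simpa using hw)
    simp only [zero_add] at hs0
    have hfe : (fun n => (p n) fun _ => w) = fun n => a n * w ^ n := by
      funext n
      rw [hp, FormalMultilinearSeries.ofScalars_apply_eq, smul_eq_mul]
    rw [hfe] at hs0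
    have hs2 : HasSum (fun n => a (n + 1) * w ^ (n + 1)) (p.sum w) := by
      refine (hasSum_nat_add_iff (f := fun n => a n * w ^ n) 1).mpr ?_
      have hz : ∑ i ∈ Finset.range 1, a i * w ^ i = 0 := by
        rw [Finset.range_one, Finset.sum_singleton]
        show a 0 * w ^ 0 = 0
        norm_num
      rw [hz, add_zero]
      exact hs0
    exact hs2.tsum_eq.symm
  · rw [tc_coeff hball.hasFPowerSeriesAt 0]
    simp [hp, FormalMultilinearSeries.coeff, FormalMultilinearSeries.ofScalars, ha]
  · intro j
    rw [tc_coeff hball.hasFPowerSeriesAt (j+1)]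
    show (p (j+1)) 1 = M j
    rw [hp]
    have := FormalMultilinearSeries.ofScalars_apply_eq (𝕜 := ℝ) (E := ℝ) (c := a) 1 (j+1)
    simp only [one_pow, smul_eq_mul, mul_one] at this
    calc (FormalMultilinearSeries.ofScalars ℝ a (j+1)) 1
        = (FormalMultilinearSeries.ofScalars ℝ a (j+1)) (fun _ => 1) := rfl
      _ = a (j+1) := this
      _ = M j := rfl


lemma claimA (k : ℕ) (M : ℕ → ℝ) (S Sinv f₁ R : ℝ → ℝ)
    (hSA : AnalyticAt ℝ S 0) (hSinvA : AnalyticAt ℝ Sinv 0)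
    (hf₁A : AnalyticAt ℝ f₁ 0) (hf₁0 : f₁ 0 = 1)
    (hf₁e : Sinv =ᶠ[𝓝 (0:ℝ)] fun x => x * f₁ x)
    (hdSinv0 : deriv Sinv 0 = 1)
    (hRA : AnalyticAt ℝ R 0)
    (hSdec : S =ᶠ[𝓝 (0:ℝ)] fun w =>
      (∑ j ∈ Finset.range (k+1), M j * (w ^ (j+1) * 1)) + w ^ (k+2) * R w)
    (hcomp0 : ∀ᶠ x in 𝓝 (0:ℝ), S (Sinv x) = x) :
    tc (fun x => ((f₁ x)⁻¹) ^ (k+1)) 0 k = ((k:ℝ) + 1) * M k := by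
  have hf0 : Sinv 0 = 0 := by
    have h := hf₁e.eq_of_nhds
    simpa using h
  have htend : Filter.Tendsto Sinv (𝓝 (0:ℝ)) (𝓝 (0:ℝ)) := by
    have h := hSinvA.continuousAt.tendsto
    rwa [hf0] at h
  -- composed decomposition
  have hXev : ∀ᶠ x in 𝓝 (0:ℝ), x =
      (∑ j ∈ Finset.range (k+1), M j * (Sinv x ^ (j+1) * 1)) + Sinv x ^ (k+2) * R (Sinv x) := by
    filter_upwards [htend.eventually hSdec, hcomp0] with x h1 h2
    exact h2.symm.trans h1
  have hXfun : (fun x => (∑ j ∈ Finset.range (k+1), M j * (Sinv x ^ (j+1) * 1))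
      + Sinv x ^ (k+2) * R (Sinv x)) =ᶠ[𝓝 (0:ℝ)] (fun x => x) := by
    filter_upwards [hXev] with x hx
    exact hx.symm
  have hder := hXfun.deriv
  have hRan : ∀ᶠ x in 𝓝 (0:ℝ), AnalyticAt ℝ R (Sinv x) :=
    htend.eventually hRA.eventually_analyticAt
  have key1 : ∀ᶠ y in 𝓝 (0:ℝ), (1:ℝ) =
      (∑ j ∈ Finset.range (k+1),
        M j * ((((j+1:ℕ):ℝ) * Sinv y ^ j * deriv Sinv y) * 1))
      + ((((k+2:ℕ):ℝ) * Sinv y ^ (k+1) * deriv Sinv y) * R (Sinv y)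
          + Sinv y ^ (k+2) * (deriv R (Sinv y) * deriv Sinv y)) := by
    filter_upwards [hder, hSinvA.eventually_analyticAt, hRan] with y hy hAy hRy
    have hfy : HasDerivAt Sinv (deriv Sinv y) y := hAy.differentiableAt.hasDerivAt
    have hsum : HasDerivAt (fun x => ∑ j ∈ Finset.range (k+1), M j * (Sinv x ^ (j+1) * 1))
        (∑ j ∈ Finset.range (k+1),
          M j * ((((j+1:ℕ):ℝ) * Sinv y ^ j * deriv Sinv y) * 1)) y :=
      HasDerivAt.fun_sum (fun j _ => ((hfy.fun_pow (j+1)).mul_const 1).const_mul (M j))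
    have hR' : HasDerivAt (fun x => R (Sinv x)) (deriv R (Sinv y) * deriv Sinv y) y :=
      (hRy.differentiableAt.hasDerivAt).comp y hfy
    have hlast : HasDerivAt (fun x => Sinv x ^ (k+2) * R (Sinv x))
        ((((k+2:ℕ):ℝ) * Sinv y ^ (k+1) * deriv Sinv y) * R (Sinv y)
          + Sinv y ^ (k+2) * (deriv R (Sinv y) * deriv Sinv y)) y :=
      (hfy.pow (k+2)).mul hR'
    have htot := (hsum.fun_add hlast).deriv
    have h1 : deriv (fun x : ℝ => x) y = 1 := by simp
    rw [← htot, hy, h1]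
  have hf₁ne : ∀ᶠ x in 𝓝 (0:ℝ), f₁ x ≠ 0 :=
    hf₁A.continuousAt.eventually_ne (by rw [hf₁0]; norm_num)
  -- the multiplied-out identity
  have EqA : (fun x => ((f₁ x)⁻¹) ^ (k+1)) =ᶠ[𝓝 (0:ℝ)]
      fun x => (∑ j ∈ Finset.range (k+1),
          ((j:ℝ)+1) * M j * (x ^ j * (deriv Sinv x * ((f₁ x)⁻¹) ^ ((k-j)+1))))
        + x ^ (k+1) * (((k:ℝ)+2) * deriv Sinv x * R (Sinv x)
            + Sinv x * (deriv R (Sinv x) * deriv Sinv x)) := by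
    filter_upwards [key1, hf₁e, hf₁ne] with y h1 h2 h3
    have h4 : f₁ y ^ (k+1) * ((f₁ y)⁻¹) ^ (k+1) = 1 := by
      rw [inv_pow_cancel h3 (le_refl (k+1)), Nat.sub_self, pow_zero]
    have hmul := congrArg (fun z : ℝ => z * ((f₁ y)⁻¹) ^ (k+1)) h1
    simp only [one_mul] at hmul
    rw [hmul, add_mul, Finset.sum_mul]
    congr 1
    · refine Finset.sum_congr rfl ?_
      intro j hj
      have hjk : j ≤ k := by have := Finset.mem_range.mp hj; omega
      have hkj : (k - j) + 1 = (k + 1) - j := by omega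
      rw [hkj, h2, mul_pow, ← inv_pow_cancel h3 (show j ≤ k + 1 by omega)]
      push_cast
      ring
    · rw [h2, mul_pow, mul_pow]
      push_cast
      linear_combination (((k:ℝ)+2) * y^(k+1) * deriv Sinv y * R (y * f₁ y)
        + y^(k+2) * f₁ y * (deriv R (y * f₁ y) * deriv Sinv y)) * h4
  -- analyticity
  have hinvA : AnalyticAt ℝ (fun x => (f₁ x)⁻¹) 0 := hf₁A.inv (by rw [hf₁0]; norm_num)
  have hdSA : AnalyticAt ℝ (deriv Sinv) 0 := analyticAt_deriv hSinvA
  have hWjA : ∀ j : ℕ, AnalyticAt ℝ (fun x => deriv Sinv x * ((f₁ x)⁻¹) ^ ((k-j)+1)) 0 := by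
    intro j
    exact hdSA.mul (hinvA.pow _)
  have hxWjA : ∀ j : ℕ, AnalyticAt ℝ
      (fun x : ℝ => x ^ j * (deriv Sinv x * ((f₁ x)⁻¹) ^ ((k-j)+1))) 0 := by
    intro j
    exact (analyticAt_id.pow j).mul (hWjA j)
  have htermA : ∀ j ∈ Finset.range (k+1), AnalyticAt ℝ
      (fun x : ℝ => ((j:ℝ)+1) * M j * (x ^ j * (deriv Sinv x * ((f₁ x)⁻¹) ^ ((k-j)+1)))) 0 := by
    intro j _
    exact analyticAt_const.mul (hxWjA j)
  have hVA : AnalyticAt ℝ (fun x => ((k:ℝ)+2) * deriv Sinv x * R (Sinv x)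
      + Sinv x * (deriv R (Sinv x) * deriv Sinv x)) 0 := by
    have hRS : AnalyticAt ℝ (fun x => R (Sinv x)) 0 := by
      have : AnalyticAt ℝ R (Sinv 0) := by rwa [hf0]
      exact this.comp hSinvA
    have hRS' : AnalyticAt ℝ (fun x => deriv R (Sinv x)) 0 := by
      have : AnalyticAt ℝ (deriv R) (Sinv 0) := by rw [hf0]; exact analyticAt_deriv hRA
      exact this.comp hSinvA
    exact ((analyticAt_const.mul hdSA).mul hRS).add (hSinvA.mul (hRS'.mul hdSA))
  have hlastA : AnalyticAt ℝ (fun x : ℝ => x ^ (k+1) * (((k:ℝ)+2) * deriv Sinv x * R (Sinv x)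
      + Sinv x * (deriv R (Sinv x) * deriv Sinv x))) 0 := (analyticAt_id.pow _).mul hVA
  -- take coefficients
  rw [tc_congr EqA k, tc_add (Finset.analyticAt_fun_sum _ htermA) hlastA k, tc_sum _ htermA k]
  have hlast0 : tc (fun x : ℝ => x ^ (k+1) * (((k:ℝ)+2) * deriv Sinv x * R (Sinv x)
      + Sinv x * (deriv R (Sinv x) * deriv Sinv x))) 0 k = 0 := by
    rw [tc_pow_shift0 hVA (k+1) k, if_neg (by omega)]
  rw [hlast0, add_zero]
  have hterm_eval : ∀ j ∈ Finset.range (k+1),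
      tc (fun x : ℝ => ((j:ℝ)+1) * M j * (x ^ j * (deriv Sinv x * ((f₁ x)⁻¹) ^ ((k-j)+1)))) 0 k
        = if j = k then ((k:ℝ)+1) * M k else 0 := by
    intro j hj
    have hjk : j ≤ k := by have := Finset.mem_range.mp hj; omega
    rw [tc_const_mul (hxWjA j), tc_pow_shift0 (hWjA j) j k, if_pos hjk]
    rcases eq_or_ne j k with rfl | hne
    · rw [if_pos rfl, Nat.sub_self, tc_zero, hdSinv0, hf₁0]
      norm_num
    · rw [if_neg hne]
      obtain ⟨s, hs⟩ : ∃ s, k - j = s + 1 := ⟨k - j - 1, by omega⟩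
      have heq2 : (fun x => deriv Sinv x * ((f₁ x)⁻¹) ^ ((k-j)+1)) =ᶠ[𝓝 (0:ℝ)]
          (fun x => (f₁ x + x * deriv f₁ x) * ((f₁ x)⁻¹) ^ (s + 2)) := by
        filter_upwards [deriv_shift_ev hf₁A hf₁e] with y hy
        rw [hy, hs]
      rw [tc_congr heq2, hs, tc_rho hf₁A (by rw [hf₁0]; norm_num) s, mul_zero]
  rw [Finset.sum_congr rfl hterm_eval,
    Finset.sum_ite_eq' (Finset.range (k+1)) k (fun _ => ((k:ℝ)+1) * M k),
    if_pos (Finset.mem_range.mpr (by omega))]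


lemma claimB (k : ℕ) (f₁ e₁ H : ℝ → ℝ)
    (hf₁A : AnalyticAt ℝ f₁ 0) (hf₁0 : f₁ 0 = 1)
    (he₁A : AnalyticAt ℝ e₁ 0) (he₁0 : e₁ 0 = 1)
    (hEe : (fun x => Real.exp x - 1) =ᶠ[𝓝 (0:ℝ)] fun x => x * e₁ x)
    (hDA : AnalyticAt ℝ (deriv H) 1)
    (he₁fW : e₁ =ᶠ[𝓝 (0:ℝ)] fun x =>
      f₁ x * (Real.exp x * (deriv H (Real.exp x) * (Real.exp x - 1) + 1))) :
    tc (fun x => ((f₁ x)⁻¹) ^ (k+1)) 0 k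
      = ∑ j ∈ Finset.range (k+1),
          (((k+1).choose j : ℕ) : ℝ) * tc (fun u => u ^ k * (deriv H u) ^ j) 1 (k - j) := by
  have hf₁ne : ∀ᶠ x in 𝓝 (0:ℝ), f₁ x ≠ 0 :=
    hf₁A.continuousAt.eventually_ne (by rw [hf₁0]; norm_num)
  have he₁ne : ∀ᶠ x in 𝓝 (0:ℝ), e₁ x ≠ 0 :=
    he₁A.continuousAt.eventually_ne (by rw [he₁0]; norm_num)
  -- Eventual identity
  have EqB : (fun x => ((f₁ x)⁻¹) ^ (k+1)) =ᶠ[𝓝 (0:ℝ)]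
      fun x => (∑ j ∈ Finset.range (k+1),
          (((k+1).choose j : ℕ) : ℝ) * (x ^ j * ((Real.exp x ^ k * deriv H (Real.exp x) ^ j)
            * Real.exp x * ((e₁ x)⁻¹) ^ ((k-j)+1))))
        + x ^ (k+1) * (Real.exp x ^ (k+1) * deriv H (Real.exp x) ^ (k+1)) := by
    filter_upwards [he₁fW, hEe, hf₁ne, he₁ne] with y h1 h2 h3 h4
    set W : ℝ := Real.exp y * (deriv H (Real.exp y) * (Real.exp y - 1) + 1) with hWdef
    have hWne : W ≠ 0 := by
      intro h0
      rw [h0, mul_zero] at h1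
      exact h4 h1
    have hW : (f₁ y)⁻¹ = W * (e₁ y)⁻¹ := by
      rw [h1, mul_inv]
      field_simp
    rw [hW, mul_pow, hWdef, mul_pow, add_pow]
    rw [Finset.sum_range_succ]
    rw [mul_add, add_mul]
    congr 1
    · rw [Finset.mul_sum, Finset.sum_mul]
      refine Finset.sum_congr rfl ?_
      intro j hj
      have hjk : j ≤ k := by have := Finset.mem_range.mp hj; omega
      have hkj : (k + 1) - j = (k - j) + 1 := by omega
      rw [h2, one_pow, mul_one, mul_pow, mul_pow, ← hkj,
        ← inv_pow_cancel h4 (show j ≤ k + 1 by omega)]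
      ring
    · have h5 : e₁ y ^ (k+1) * ((e₁ y)⁻¹) ^ (k+1) = 1 := by
        rw [inv_pow_cancel h4 (le_refl (k+1)), Nat.sub_self, pow_zero]
      rw [h2, Nat.sub_self, pow_zero, mul_one, Nat.choose_self, Nat.cast_one, mul_one,
        mul_pow, mul_pow]
      linear_combination (Real.exp y ^ (k+1) * deriv H (Real.exp y) ^ (k+1) * y ^ (k+1)) * h5
  -- analyticity
  have hinvA : AnalyticAt ℝ (fun x => (e₁ x)⁻¹) 0 := he₁A.inv (by rw [he₁0]; norm_num)
  have hDexpA : AnalyticAt ℝ (fun x => deriv H (Real.exp x)) 0 := by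
    have : AnalyticAt ℝ (deriv H) (Real.exp 0) := by rwa [Real.exp_zero]
    exact this.comp analyticAt_rexp
  have hQjA : ∀ j : ℕ, AnalyticAt ℝ (fun u : ℝ => u ^ k * (deriv H u) ^ j) 1 := by
    intro j
    exact (analyticAt_id.pow k).mul (hDA.pow j)
  have hAjA : ∀ j : ℕ, AnalyticAt ℝ (fun x => (Real.exp x ^ k * deriv H (Real.exp x) ^ j)
      * Real.exp x * ((e₁ x)⁻¹) ^ ((k-j)+1)) 0 := by
    intro j
    exact (((analyticAt_rexp.pow k).mul (hDexpA.pow j)).mul analyticAt_rexp).mul (hinvA.pow _)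
  have hxAjA : ∀ j : ℕ, AnalyticAt ℝ (fun x : ℝ => x ^ j * ((Real.exp x ^ k * deriv H (Real.exp x) ^ j)
      * Real.exp x * ((e₁ x)⁻¹) ^ ((k-j)+1))) 0 := by
    intro j
    exact (analyticAt_id.pow j).mul (hAjA j)
  have htermA : ∀ j ∈ Finset.range (k+1), AnalyticAt ℝ
      (fun x : ℝ => (((k+1).choose j : ℕ) : ℝ) * (x ^ j * ((Real.exp x ^ k * deriv H (Real.exp x) ^ j)
        * Real.exp x * ((e₁ x)⁻¹) ^ ((k-j)+1)))) 0 := by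
    intro j _
    exact analyticAt_const.mul (hxAjA j)
  have hTA : AnalyticAt ℝ (fun x => Real.exp x ^ (k+1) * deriv H (Real.exp x) ^ (k+1)) 0 :=
    (analyticAt_rexp.pow _).mul (hDexpA.pow _)
  have hlastA : AnalyticAt ℝ (fun x : ℝ => x ^ (k+1)
      * (Real.exp x ^ (k+1) * deriv H (Real.exp x) ^ (k+1))) 0 := (analyticAt_id.pow _).mul hTA
  rw [tc_congr EqB k, tc_add (Finset.analyticAt_fun_sum _ htermA) hlastA k, tc_sum _ htermA k]
  have hlast0 : tc (fun x : ℝ => x ^ (k+1)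
      * (Real.exp x ^ (k+1) * deriv H (Real.exp x) ^ (k+1))) 0 k = 0 := by
    rw [tc_pow_shift0 hTA (k+1) k, if_neg (by omega)]
  rw [hlast0, add_zero]
  refine Finset.sum_congr rfl ?_
  intro j hj
  have hjk : j ≤ k := by have := Finset.mem_range.mp hj; omega
  rw [tc_const_mul (hxAjA j), tc_pow_shift0 (hAjA j) j k, if_pos hjk]
  congr 1
  have hsubj := tc_sub (Q := fun u : ℝ => u ^ k * (deriv H u) ^ j) (hQjA j) he₁A he₁0 hEe (k-j)
  exact hsubj


end Stmt9

open Stmt9 Topology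

/-- Lemma 6.1: for a compactly supported probability measure `μ` on `ℝ` with moments `M k`,
moment generating series `S(w) = ∑_k M_k w^{k+1}` with local inverse `Sinv`, `R`-transform
`Rt(z) = 1/Sinv(z) - 1/z`, and `H(u) = ∫_0^{ln u} Rt + ln(ln u/(u-1))` (characterized by
`H(1) = 0` and `H'(u) = Rt(ln u)/u + 1/(u ln u) - 1/(u-1)`), one has for every `k ≥ 1`
`M_k = ∑_{ℓ=0}^{k} k!/(ℓ!(ℓ+1)!(k-ℓ)!) ∂^ℓ/∂u^ℓ [u^k H'(u)^{k-ℓ}] |_{u=1}`. -/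
theorem stmt_9 (μ : Measure ℝ) [IsProbabilityMeasure μ]
    (C : ℝ) (hsupp : ∀ᵐ x ∂μ, |x| ≤ C)
    (M : ℕ → ℝ) (hM : ∀ k, M k = ∫ x, x ^ k ∂μ)
    (Sinv : ℝ → ℝ) (hSinvA : AnalyticAt ℝ Sinv 0) (hSinv0 : Sinv 0 = 0)
    (hScomp : ∀ᶠ z in nhds (0 : ℝ), ∑' k : ℕ, M k * Sinv z ^ (k + 1) = z)
    (Rt : ℝ → ℝ) (hRtA : AnalyticAt ℝ Rt 0)
    (hRt : ∀ᶠ z in nhdsWithin (0 : ℝ) {0}ᶜ, Rt z = (Sinv z)⁻¹ - z⁻¹)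
    (H : ℝ → ℝ) (hHA : AnalyticAt ℝ H 1) (hH1 : H 1 = 0)
    (hH' : ∀ᶠ u in nhdsWithin (1 : ℝ) {1}ᶜ,
      deriv H u = Rt (Real.log u) / u + 1 / (u * Real.log u) - 1 / (u - 1)) :
    ∀ k : ℕ, 1 ≤ k →
      M k = ∑ ℓ ∈ Finset.range (k + 1),
        ((k.factorial : ℝ) / (ℓ.factorial * (ℓ + 1).factorial * (k - ℓ).factorial)) *
          iteratedDeriv ℓ (fun u : ℝ => u ^ k * (deriv H u) ^ (k - ℓ)) 1 := by
  intro k hk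
  -- moments facts
  have hM0 : M 0 = 1 := by
    rw [hM 0]
    simp
  set K : ℝ := max C 1 with hKdef
  have hK1 : (1:ℝ) ≤ K := le_max_right _ _
  have hMb : ∀ j, |M j| ≤ K ^ j := by
    intro j
    rw [hM j]
    have hbound : ∀ᵐ x ∂μ, ‖x ^ j‖ ≤ K ^ j := by
      filter_upwards [hsupp] with x hx
      rw [Real.norm_eq_abs, abs_pow]
      exact pow_le_pow_left₀ (abs_nonneg x) (hx.trans (le_max_left C 1)) j
    have h := norm_integral_le_of_norm_le_const (μ := μ) hbound
    rwa [probReal_univ, mul_one, Real.norm_eq_abs] at h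
  obtain ⟨S, hSA, hSsum, tcS0, tcS⟩ := build_S M K hK1 hMb
  -- composition
  have htendS : Filter.Tendsto Sinv (𝓝 (0:ℝ)) (𝓝 (0:ℝ)) := by
    have h := hSinvA.continuousAt.tendsto
    rwa [hSinv0] at h
  have hcomp0 : ∀ᶠ x in 𝓝 (0:ℝ), S (Sinv x) = x := by
    filter_upwards [htendS.eventually hSsum, hScomp] with x h1 h2
    rw [h1]
    exact h2
  -- derivative of Sinv at 0
  have hS'0 : deriv S 0 = 1 := by
    rw [← tc_one, tcS 0, hM0]
  have hdSinv0 : deriv Sinv 0 = 1 := by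
    have h1 : deriv (fun x => S (Sinv x)) 0 = 1 := by
      have he : (fun x => S (Sinv x)) =ᶠ[𝓝 (0:ℝ)] (fun x => x) := by
        filter_upwards [hcomp0] with x hx; exact hx
      rw [he.deriv_eq]
      simp
    have hS' : HasDerivAt S (deriv S (Sinv 0)) (Sinv 0) := by
      have : AnalyticAt ℝ S (Sinv 0) := by rwa [hSinv0]
      exact this.differentiableAt.hasDerivAt
    have hf' : HasDerivAt Sinv (deriv Sinv 0) 0 := hSinvA.differentiableAt.hasDerivAt
    have hchain : deriv (fun x => S (Sinv x)) 0 = deriv S (Sinv 0) * deriv Sinv 0 :=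
      (hS'.comp 0 hf').deriv
    rw [hchain, hSinv0, hS'0, one_mul] at h1
    exact h1
  -- factor Sinv = x f₁
  obtain ⟨f₁, hf₁A, hf₁e0⟩ := tc_factor hSinvA 1 (by
    intro i hi
    obtain rfl : i = 0 := by omega
    rw [tc_zero, hSinv0])
  have hf₁e : Sinv =ᶠ[𝓝 (0:ℝ)] fun x => x * f₁ x := by
    refine hf₁e0.trans ?_
    filter_upwards with x
    rw [sub_zero, pow_one]
  have hf₁0 : f₁ 0 = 1 := by
    rw [← deriv_of_shift hf₁A hf₁e]
    exact hdSinv0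
  -- factor exp - 1 = x e₁
  have hEA : AnalyticAt ℝ (fun x : ℝ => Real.exp x - 1) 0 := by
    exact analyticAt_rexp.sub analyticAt_const
  obtain ⟨e₁, he₁A, hEe0⟩ := tc_factor hEA 1 (by
    intro i hi
    obtain rfl : i = 0 := by omega
    rw [tc_zero]
    simp)
  have hEe : (fun x : ℝ => Real.exp x - 1) =ᶠ[𝓝 (0:ℝ)] fun x => x * e₁ x := by
    refine hEe0.trans ?_
    filter_upwards with x
    rw [sub_zero, pow_one]
  have he₁0 : e₁ 0 = 1 := by
    have hd := deriv_of_shift he₁A hEe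
    have hdE : deriv (fun x : ℝ => Real.exp x - 1) 0 = 1 := by
      have h := ((Real.hasDerivAt_exp 0).sub_const 1).deriv
      rw [h, Real.exp_zero]
    rw [← hd]
    exact hdE
  -- analytic H'
  have hDA : AnalyticAt ℝ (deriv H) 1 := analyticAt_deriv hHA
  -- the key punctured identity
  set W : ℝ → ℝ := fun x => Real.exp x * (deriv H (Real.exp x) * (Real.exp x - 1) + 1) with hWdef
  have hWA : AnalyticAt ℝ W 0 := by
    have hDe : AnalyticAt ℝ (fun x => deriv H (Real.exp x)) 0 := by
      have : AnalyticAt ℝ (deriv H) (Real.exp 0) := by rwa [Real.exp_zero]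
      exact this.comp analyticAt_rexp
    exact analyticAt_rexp.mul
      ((hDe.mul (analyticAt_rexp.sub analyticAt_const)).add analyticAt_const)
  have hf₁ne : ∀ᶠ x in 𝓝 (0:ℝ), f₁ x ≠ 0 :=
    hf₁A.continuousAt.eventually_ne (by rw [hf₁0]; norm_num)
  have hexp_p : Filter.Tendsto Real.exp (𝓝[≠] (0:ℝ)) (𝓝[≠] (1:ℝ)) := by
    rw [tendsto_nhdsWithin_iff]
    constructor
    · have h : Filter.Tendsto Real.exp (𝓝 (0:ℝ)) (𝓝 (1:ℝ)) := by
        have h2 := Real.continuous_exp.continuousAt (x := (0:ℝ)).tendsto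
        rwa [Real.exp_zero] at h2
      exact h.mono_left nhdsWithin_le_nhds
    · filter_upwards [eventually_mem_nhdsWithin] with x hx
      simp only [Set.mem_compl_iff, Set.mem_singleton_iff] at hx ⊢
      intro h
      exact hx ((Real.exp_eq_one_iff _).mp h)
  have hEfW : ∀ᶠ x in 𝓝[≠] (0:ℝ), Real.exp x - 1 = Sinv x * W x := by
    filter_upwards [hRt, hexp_p.eventually hH', eventually_mem_nhdsWithin,
      hf₁e.filter_mono nhdsWithin_le_nhds, hf₁ne.filter_mono nhdsWithin_le_nhds]
      with x hRtx hH'x hx0 hfe hfne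
    have hx0' : x ≠ 0 := by simpa using hx0
    have hfx : Sinv x ≠ 0 := by
      rw [hfe]
      exact mul_ne_zero hx0' hfne
    have hexpne : Real.exp x ≠ 0 := (Real.exp_pos x).ne'
    have hexpne1 : Real.exp x - 1 ≠ 0 := by
      rw [sub_ne_zero]
      intro h
      exact hx0' ((Real.exp_eq_one_iff _).mp h)
    rw [Real.log_exp] at hH'x
    rw [hRtx] at hH'x
    rw [hWdef]
    simp only
    rw [hH'x]
    field_simp
    ring
  have hEfW' : (fun x : ℝ => Real.exp x - 1) =ᶠ[𝓝 (0:ℝ)] fun x => Sinv x * W x :=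
    (hEA.frequently_eq_iff_eventually_eq (hSinvA.mul hWA)).mp hEfW.frequently
  have he₁fW : e₁ =ᶠ[𝓝 (0:ℝ)] fun x => f₁ x * W x := by
    have h1 : ∀ᶠ x in 𝓝[≠] (0:ℝ), e₁ x = f₁ x * W x := by
      filter_upwards [hEe.filter_mono nhdsWithin_le_nhds, hf₁e.filter_mono nhdsWithin_le_nhds,
        hEfW'.filter_mono nhdsWithin_le_nhds, eventually_mem_nhdsWithin] with x h1 h2 h3 hx0
      have hx0' : x ≠ 0 := by simpa using hx0
      have hcalc : x * e₁ x = x * (f₁ x * W x) := by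
        rw [← h1, h3, h2]
        ring
      exact mul_left_cancel₀ hx0' hcalc
    exact (he₁A.frequently_eq_iff_eventually_eq (hf₁A.mul hWA)).mp h1.frequently
  -- decomposition of S
  have hmonA : ∀ j : ℕ, AnalyticAt ℝ (fun w : ℝ => w ^ (j+1) * 1) 0 := by
    intro j
    exact (analyticAt_id.pow _).mul analyticAt_const
  have hFjA : ∀ j : ℕ, AnalyticAt ℝ (fun w : ℝ => M j * (w ^ (j+1) * 1)) 0 := by
    intro j
    exact analyticAt_const.mul (hmonA j)
  have hsumA : AnalyticAt ℝ (fun w : ℝ => ∑ j ∈ Finset.range (k+1), M j * (w ^ (j+1) * 1)) 0 :=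
    Finset.analyticAt_fun_sum _ fun j _ => hFjA j
  have hPA : AnalyticAt ℝ (fun w : ℝ => S w + (-1) * ∑ j ∈ Finset.range (k+1),
      M j * (w ^ (j+1) * 1)) 0 := hSA.add (analyticAt_const.mul hsumA)
  have tcmon : ∀ (j i : ℕ), tc (fun w : ℝ => M j * (w ^ (j+1) * 1)) 0 i
      = if j + 1 = i then M j else 0 := by
    intro j i
    rw [tc_const_mul (hmonA j), tc_pow_shift0 analyticAt_const (j+1) i]
    rcases eq_or_ne (j+1) i with h | h
    · rw [if_pos h, if_pos (by omega), tc_const, if_pos (by omega), mul_one]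
    · rw [if_neg h]
      by_cases hle : j + 1 ≤ i
      · rw [if_pos hle, tc_const, if_neg (by omega), mul_zero]
      · rw [if_neg hle, mul_zero]
  have hPc : ∀ i, i < k + 2 → tc (fun w : ℝ => S w + (-1) * ∑ j ∈ Finset.range (k+1),
      M j * (w ^ (j+1) * 1)) 0 i = 0 := by
    intro i hi
    rw [tc_add hSA (analyticAt_const.fun_mul hsumA), tc_const_mul hsumA,
      tc_sum _ (fun j _ => hFjA j)]
    have hsum_eval : ∑ j ∈ Finset.range (k+1), tc (fun w : ℝ => M j * (w ^ (j+1) * 1)) 0 i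
        = tc S 0 i := by
      rw [Finset.sum_congr rfl (fun j _ => tcmon j i)]
      match i with
      | 0 =>
        rw [tcS0]
        exact Finset.sum_eq_zero (fun j _ => by rw [if_neg (by omega)])
      | Nat.succ i₀ =>
        rw [tcS i₀]
        have : ∀ j ∈ Finset.range (k+1), (if j + 1 = i₀ + 1 then M j else 0)
            = if j = i₀ then M j else 0 := by
          intro j _
          congr 1
          simp [Nat.succ_inj]
        rw [Finset.sum_congr rfl this, Finset.sum_ite_eq' (Finset.range (k+1)) i₀ M,
          if_pos (Finset.mem_range.mpr (by omega))]
    rw [hsum_eval]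
    ring
  obtain ⟨R, hRA, hPfac⟩ := tc_factor hPA (k+2) hPc
  have hSdec : S =ᶠ[𝓝 (0:ℝ)] fun w =>
      (∑ j ∈ Finset.range (k+1), M j * (w ^ (j+1) * 1)) + w ^ (k+2) * R w := by
    filter_upwards [hPfac] with w hw
    rw [sub_zero] at hw
    linarith [hw]
  -- the two claims
  have hA := claimA k M S Sinv f₁ R hSA hSinvA hf₁A hf₁0 hf₁e hdSinv0 hRA hSdec hcomp0
  have hB := claimB k f₁ e₁ H hf₁A hf₁0 he₁A he₁0 hEe hDA he₁fW
  have key : ((k:ℝ) + 1) * M k = ∑ j ∈ Finset.range (k+1),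
      (((k+1).choose j : ℕ) : ℝ) * tc (fun u => u ^ k * (deriv H u) ^ j) 1 (k - j) := by
    rw [← hA, hB]
  -- reflect the sum
  have key2 : ((k:ℝ) + 1) * M k = ∑ ℓ ∈ Finset.range (k+1),
      (((k+1).choose (k-ℓ) : ℕ) : ℝ) * tc (fun u => u ^ k * (deriv H u) ^ (k-ℓ)) 1 ℓ := by
    rw [key, ← Finset.sum_range_reflect]
    refine Finset.sum_congr rfl ?_
    intro ℓ hℓ
    have hℓk : ℓ ≤ k := by have := Finset.mem_range.mp hℓ; omega
    have h1 : k + 1 - 1 - ℓ = k - ℓ := by omega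
    have h2 : k - (k - ℓ) = ℓ := by omega
    rw [h1, h2]
  -- final arithmetic
  have hk1 : ((k:ℝ) + 1) ≠ 0 := by positivity
  calc M k = (((k:ℝ) + 1) * M k) / ((k:ℝ) + 1) := by field_simp
  _ = (∑ ℓ ∈ Finset.range (k+1),
      (((k+1).choose (k-ℓ) : ℕ) : ℝ) * tc (fun u => u ^ k * (deriv H u) ^ (k-ℓ)) 1 ℓ)
        / ((k:ℝ) + 1) := by rw [key2]
  _ = ∑ ℓ ∈ Finset.range (k + 1),
        ((k.factorial : ℝ) / (ℓ.factorial * (ℓ + 1).factorial * (k - ℓ).factorial)) *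
          iteratedDeriv ℓ (fun u : ℝ => u ^ k * (deriv H u) ^ (k - ℓ)) 1 := by
      rw [Finset.sum_div]
      refine Finset.sum_congr rfl ?_
      intro ℓ hℓ
      have hℓk : ℓ ≤ k := by have := Finset.mem_range.mp hℓ; omega
      have hnat : (k+1).choose (k-ℓ) * ((k-ℓ).factorial * (ℓ+1).factorial) = (k+1).factorial := by
        have h0 := Nat.choose_mul_factorial_mul_factorial (show k - ℓ ≤ k + 1 by omega)
        rw [show (k+1) - (k-ℓ) = ℓ + 1 by omega] at h0
        rw [← mul_assoc]
        exact h0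
      have hcast : (((k+1).choose (k-ℓ) : ℕ) : ℝ) * (((k-ℓ).factorial : ℕ) : ℝ)
            * (((ℓ+1).factorial : ℕ) : ℝ)
          = ((k:ℝ) + 1) * ((k.factorial : ℕ) : ℝ) := by
        have h1 : ((k+1).choose (k-ℓ)) * ((k-ℓ).factorial) * ((ℓ+1).factorial)
            = (k+1) * k.factorial := by
          rw [mul_assoc, hnat, Nat.factorial_succ]
        exact_mod_cast h1
      have hfacne : ∀ n : ℕ, ((n.factorial : ℕ) : ℝ) ≠ 0 := by
        intro n
        exact_mod_cast n.factorial_ne_zero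
      have hc : (((k+1).choose (k-ℓ) : ℕ) : ℝ) / ((k:ℝ) + 1)
          = ((k.factorial : ℝ) / (ℓ.factorial * (ℓ + 1).factorial * (k - ℓ).factorial))
            * (ℓ.factorial : ℝ) := by
        rw [div_eq_iff hk1]
        rw [div_mul_eq_mul_div, div_mul_eq_mul_div, eq_div_iff (by
          exact mul_ne_zero (mul_ne_zero (hfacne ℓ) (hfacne (ℓ+1))) (hfacne (k-ℓ)))]
        linear_combination (ℓ.factorial : ℝ) * hcast
      calc (((k+1).choose (k-ℓ) : ℕ) : ℝ) * tc (fun u => u ^ k * (deriv H u) ^ (k-ℓ)) 1 ℓ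
            / ((k:ℝ) + 1)
          = ((((k+1).choose (k-ℓ) : ℕ) : ℝ) / ((k:ℝ) + 1))
            * tc (fun u => u ^ k * (deriv H u) ^ (k-ℓ)) 1 ℓ := by ring
        _ = _ := by
            rw [hc, tc_iteratedDeriv]
            ring
end
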